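/- arXiv:2512.24096 — 2 statements merged into one kernel-verified Lean document; each statement's English description precedes it below -/
import Mathlib

section
/- Fix an observed data distribution P of (Y, D, Z) on 𝒴 × {0,1} × 𝒵 with P(Z=z) > 0 for all z ∈ 𝒵. A collection of functions {π_z : 𝒴² × {0,1}² → [0,1]}_{z∈𝒵} arises as the collection of marginal pmfs of some primitive distribution P* that satisfies IV validity and generates P if and only if the following three conditions hold: (1) data matching: for every y ∈ 𝒴 and z ∈ 𝒵, P(Y=y, D=1 | Z=z) = Σ_{y0∈𝒴, d1∈{0,1}} π_z(y0, y, 1, d1) and P(Y=y, D=0 | Z=z) = Σ_{y1∈𝒴, d1∈{0,1}} π_z(y, y1, 0, d1); (2) common potential-outcome marginal: for all y0, y1 ∈ 𝒴 and all z ∈ 𝒵, Σ_{(d0,d1)∈{0,1}²} π_z(y0, y1, d0, d1) = Σ_{(d0,d1)∈{0,1}²} π_1(y0, y1, d0, d1); (3) validity: each π_z is nonnegative and Σ_{(y0,y1,d0,d1)∈𝒴²×{0,1}²} π_z(y0, y1, d0, d1) = 1. -/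
open Finset
open scoped Classical

namespace IVPol

/-- Sample space of model primitives `(Y(0), Y(1), D(·,·), Z)`:
a point records the two potential outcomes (elements of the finite outcome set `Y ⊆ ℝ`),
the potential treatments `D(z, a) ∈ {0,1}` for every judge `z` and policy `a`,
and the instrument value `Z`. -/
abbrev Prim (Y : Finset ℝ) (K : ℕ) := Y × Y × (Fin K → Bool → Bool) × Fin K

/-- Sample space of the observed data `(Y, D, Z)`. -/
abbrev Obs (Y : Finset ℝ) (K : ℕ) := Y × Bool × Fin K

/-- A probability distribution on a finite type, given by its pmf. -/
structure Dist (α : Type*) [Fintype α] where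
  p : α → ℝ
  nonneg : ∀ a, 0 ≤ p a
  sum_one : ∑ a, p a = 1

/-- Probability of an event. -/
noncomputable def Dist.pr {α : Type*} [Fintype α] (P : Dist α) (A : Set α) : ℝ :=
  ∑ a, if a ∈ A then P.p a else 0

/-- Expectation of a real-valued random variable. -/
noncomputable def Dist.exp {α : Type*} [Fintype α] (P : Dist α) (f : α → ℝ) : ℝ :=
  ∑ a, P.p a * f a

variable {Y : Finset ℝ} {K : ℕ}

/-- Potential treatment `D(z, a)`. -/
def pd (ω : Prim Y K) (z : Fin K) (a : Bool) : Bool := ω.2.2.1 z a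

/-- The instrument `Z`. -/
def pz (ω : Prim Y K) : Fin K := ω.2.2.2

/-- Observed treatment `D = D(Z, 0)`. -/
def obsD (ω : Prim Y K) : Bool := pd ω (pz ω) false

/-- Observed outcome `Y = Y(D(Z, 0))`. -/
def obsY (ω : Prim Y K) : Y := if obsD ω then ω.2.1 else ω.1

/-- Counterfactual outcome `Y(D(Z, 1))`. -/
noncomputable def cfY (ω : Prim Y K) : ℝ :=
  if pd ω (pz ω) true then (ω.2.1 : ℝ) else (ω.1 : ℝ)

/-- IV validity: `(Y(0), Y(1), D(·,·))` is independent of `Z`. -/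
def IVvalid (Ps : Dist (Prim Y K)) : Prop :=
  ∀ (a b : Y) (g : Fin K → Bool → Bool) (z : Fin K),
    Ps.pr {ω | ω.1 = a ∧ ω.2.1 = b ∧ ω.2.2.1 = g ∧ ω.2.2.2 = z}
      = Ps.pr {ω | ω.1 = a ∧ ω.2.1 = b ∧ ω.2.2.1 = g} * Ps.pr {ω | ω.2.2.2 = z}

/-- `Ps` generates the observed data distribution `P`:
the law of `(Y(D(Z,0)), D(Z,0), Z)` under `Ps` is `P`. -/
def generates (Ps : Dist (Prim Y K)) (P : Dist (Obs Y K)) : Prop :=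
  ∀ (y : Y) (d : Bool) (z : Fin K),
    P.p (y, d, z) = Ps.pr {ω | obsY ω = y ∧ obsD ω = d ∧ pz ω = z}

/-- Marginal pmf of judge `z`:
`π_z(y0, y1, d0, d1) = P*(Y(0)=y0, Y(1)=y1, D(z,0)=d0, D(z,1)=d1)`. -/
noncomputable def marginal (Ps : Dist (Prim Y K)) (z : Fin K) (y0 y1 : Y) (d0 d1 : Bool) : ℝ :=
  Ps.pr {ω | ω.1 = y0 ∧ ω.2.1 = y1 ∧ pd ω z false = d0 ∧ pd ω z true = d1}

/-- Probability of `Z = z` under the observed distribution. -/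
noncomputable def prZ (P : Dist (Obs Y K)) (z : Fin K) : ℝ := P.pr {o | o.2.2 = z}

/-- Conditional probability `P(Y = y, D = d | Z = z)` of the observed data. -/
noncomputable def obsCond (P : Dist (Obs Y K)) (y : Y) (d : Bool) (z : Fin K) : ℝ :=
  P.p (y, d, z) / prZ P z

section Aux

variable {α : Type*} [Fintype α]

lemma pr_nonneg (P : Dist α) (S : Set α) : 0 ≤ P.pr S := by
  refine Finset.sum_nonneg fun a _ => ?_
  split
  · exact P.nonneg a
  · exact le_refl 0

lemma pr_univ (P : Dist α) : P.pr Set.univ = 1 := by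
  simp [Dist.pr, P.sum_one]

lemma pr_empty (P : Dist α) : P.pr ∅ = 0 := by
  simp [Dist.pr]

lemma pr_congr {P : Dist α} {S T : Set α} (h : ∀ x, x ∈ S ↔ x ∈ T) : P.pr S = P.pr T := by
  rw [Set.ext h]

lemma pr_single (P : Dist α) (S : Set α) (a : α) (h : ∀ x, x ∈ S ↔ x = a) :
    P.pr S = P.p a := by
  unfold Dist.pr
  rw [Finset.sum_eq_single a]
  · rw [if_pos ((h a).mpr rfl)]
  · intro x _ hx
    rw [if_neg fun hm => hx ((h x).mp hm)]
  · intro ha; exact absurd (Finset.mem_univ a) ha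

lemma sum_pr_classify {β : Type*} [Fintype β] (P : Dist α) (S : β → Set α) (T : Set α)
    (c : α → β) (h : ∀ x b, x ∈ S b ↔ x ∈ T ∧ c x = b) :
    ∑ b : β, P.pr (S b) = P.pr T := by
  unfold Dist.pr
  rw [Finset.sum_comm]
  refine Finset.sum_congr rfl fun x _ => ?_
  by_cases ht : x ∈ T
  · simp [h, ht, Finset.sum_ite_eq, Finset.sum_ite_eq']
  · simp [h, ht]

lemma sum_ite_single {β : Type*} [Fintype β] (b : β) (C : β → Prop) [∀ x, Decidable (C x)]
    (f : β → ℝ) (h : ∀ x, C x → x = b) :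
    ∑ x : β, (if C x then f x else 0) = if C b then f b else 0 := by
  rw [Finset.sum_eq_single b]
  · intro x _ hx
    exact if_neg fun hc => hx (h x hc)
  · intro hb; exact absurd (Finset.mem_univ b) hb

lemma sum_boolfun (F : Bool → Bool → ℝ) :
    (∑ t : Bool → Bool, F (t false) (t true)) = ∑ d0 : Bool, ∑ d1 : Bool, F d0 d1 := by
  exact (Fintype.sum_equiv
    ((⟨fun t => (t false, t true), fun p b => if b then p.2 else p.1,
      fun t => by funext b; cases b <;> rfl, fun p => rfl⟩ :
        (Bool → Bool) ≃ Bool × Bool))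
    _ (fun p : Bool × Bool => F p.1 p.2) (fun t => rfl)).trans
    (Fintype.sum_prod_type (fun p : Bool × Bool => F p.1 p.2))

end Aux
section Aux2

variable {Y : Finset ℝ} {K : ℕ}

lemma pr_abgz (Ps : Dist (Prim Y K)) (a b : Y) (g : Fin K → Bool → Bool) (z : Fin K) :
    Ps.pr {ω | ω.1 = a ∧ ω.2.1 = b ∧ ω.2.2.1 = g ∧ ω.2.2.2 = z} = Ps.p (a, b, g, z) := by
  refine pr_single Ps _ _ fun x => ?_
  constructor
  · rintro ⟨h1, h2, h3, h4⟩
    obtain ⟨x1, x2, x3, x4⟩ := x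
    simp_all
  · rintro rfl
    exact ⟨rfl, rfl, rfl, rfl⟩

lemma pr_abg (Ps : Dist (Prim Y K)) (a b : Y) (g : Fin K → Bool → Bool) :
    Ps.pr {ω | ω.1 = a ∧ ω.2.1 = b ∧ ω.2.2.1 = g} = ∑ w, Ps.p (a, b, g, w) := by
  rw [← sum_pr_classify Ps
      (fun w => {ω : Prim Y K | (ω.1 = a ∧ ω.2.1 = b ∧ ω.2.2.1 = g) ∧ ω.2.2.2 = w})
      {ω | ω.1 = a ∧ ω.2.1 = b ∧ ω.2.2.1 = g} (fun ω => ω.2.2.2) (fun x w => Iff.rfl)]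
  refine Finset.sum_congr rfl fun w _ => ?_
  rw [← pr_abgz Ps a b g w]
  exact pr_congr fun x => by simp only [Set.mem_setOf_eq]; tauto

lemma pr_decomp3 (Ps : Dist (Prim Y K)) (T : Set (Prim Y K)) :
    Ps.pr T = ∑ a : Y, ∑ b : Y, ∑ g : Fin K → Bool → Bool,
      Ps.pr {ω | ω ∈ T ∧ ω.1 = a ∧ ω.2.1 = b ∧ ω.2.2.1 = g} := by
  rw [← sum_pr_classify Ps (fun a => {ω | ω ∈ T ∧ ω.1 = a}) T (fun ω => ω.1)
      (fun x b => Iff.rfl)]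
  refine Finset.sum_congr rfl fun a _ => ?_
  rw [← sum_pr_classify Ps (fun b => {ω | (ω ∈ T ∧ ω.1 = a) ∧ ω.2.1 = b})
      {ω | ω ∈ T ∧ ω.1 = a} (fun ω => ω.2.1) (fun x b => Iff.rfl)]
  refine Finset.sum_congr rfl fun b _ => ?_
  rw [← sum_pr_classify Ps
      (fun g => {ω | ((ω ∈ T ∧ ω.1 = a) ∧ ω.2.1 = b) ∧ ω.2.2.1 = g})
      {ω | (ω ∈ T ∧ ω.1 = a) ∧ ω.2.1 = b} (fun ω => ω.2.2.1) (fun x g => Iff.rfl)]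
  exact Finset.sum_congr rfl fun g _ => pr_congr fun x => by
    simp only [Set.mem_setOf_eq]; tauto

lemma pr_coord (Ps : Dist (Prim Y K)) (T : Set (Prim Y K))
    (s : Y → Y → (Fin K → Bool → Bool) → Prop)
    (h : ∀ ω, ω ∈ T ↔ s ω.1 ω.2.1 ω.2.2.1) :
    Ps.pr T = ∑ a : Y, ∑ b : Y, ∑ g : Fin K → Bool → Bool,
      if s a b g then ∑ w, Ps.p (a, b, g, w) else 0 := by
  rw [pr_decomp3 Ps T]
  refine Finset.sum_congr rfl fun a _ => Finset.sum_congr rfl fun b _ =>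
    Finset.sum_congr rfl fun g _ => ?_
  by_cases hs : s a b g
  · rw [if_pos hs, ← pr_abg Ps a b g]
    refine pr_congr fun x => ?_
    simp only [Set.mem_setOf_eq]
    constructor
    · rintro ⟨_, h1, h2, h3⟩; exact ⟨h1, h2, h3⟩
    · rintro ⟨h1, h2, h3⟩
      exact ⟨(h x).mpr (by rw [h1, h2, h3]; exact hs), h1, h2, h3⟩
  · rw [if_neg hs]
    have he : {ω | ω ∈ T ∧ ω.1 = a ∧ ω.2.1 = b ∧ ω.2.2.1 = g} = (∅ : Set (Prim Y K)) := by
      refine Set.eq_empty_iff_forall_notMem.mpr fun x hx => ?_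
      obtain ⟨hT, h1, h2, h3⟩ := hx
      exact hs (by rw [← h1, ← h2, ← h3]; exact (h x).mp hT)
    rw [he, pr_empty]

lemma pr_coordz (Ps : Dist (Prim Y K)) (T : Set (Prim Y K))
    (s : Y → Y → (Fin K → Bool → Bool) → Prop) (z : Fin K)
    (h : ∀ ω, ω ∈ T ↔ (s ω.1 ω.2.1 ω.2.2.1 ∧ ω.2.2.2 = z)) :
    Ps.pr T = ∑ a : Y, ∑ b : Y, ∑ g : Fin K → Bool → Bool,
      if s a b g then Ps.p (a, b, g, z) else 0 := by
  rw [pr_decomp3 Ps T]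
  refine Finset.sum_congr rfl fun a _ => Finset.sum_congr rfl fun b _ =>
    Finset.sum_congr rfl fun g _ => ?_
  by_cases hs : s a b g
  · rw [if_pos hs, ← pr_abgz Ps a b g z]
    refine pr_congr fun x => ?_
    simp only [Set.mem_setOf_eq]
    constructor
    · rintro ⟨hT, h1, h2, h3⟩
      exact ⟨h1, h2, h3, ((h x).mp hT).2⟩
    · rintro ⟨h1, h2, h3, h4⟩
      exact ⟨(h x).mpr ⟨by rw [h1, h2, h3]; exact hs, h4⟩, h1, h2, h3⟩
  · rw [if_neg hs]
    have he : {ω | ω ∈ T ∧ ω.1 = a ∧ ω.2.1 = b ∧ ω.2.2.1 = g} = (∅ : Set (Prim Y K)) := by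
      refine Set.eq_empty_iff_forall_notMem.mpr fun x hx => ?_
      obtain ⟨hT, h1, h2, h3⟩ := hx
      exact hs (by rw [← h1, ← h2, ← h3]; exact ((h x).mp hT).1)
    rw [he, pr_empty]

lemma iv_pmf {Ps : Dist (Prim Y K)} (hIV : IVvalid Ps) (a b : Y)
    (g : Fin K → Bool → Bool) (z : Fin K) :
    Ps.p (a, b, g, z) = (∑ w, Ps.p (a, b, g, w)) * Ps.pr {ω | ω.2.2.2 = z} := by
  have h := hIV a b g z
  rwa [pr_abgz, pr_abg] at h

lemma pr_cond_z {Ps : Dist (Prim Y K)} (hIV : IVvalid Ps)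
    (s : Y → Y → (Fin K → Bool → Bool) → Prop) (z : Fin K) :
    Ps.pr {ω | s ω.1 ω.2.1 ω.2.2.1 ∧ ω.2.2.2 = z}
      = Ps.pr {ω | s ω.1 ω.2.1 ω.2.2.1} * Ps.pr {ω | ω.2.2.2 = z} := by
  rw [pr_coordz Ps {ω | s ω.1 ω.2.1 ω.2.2.1 ∧ ω.2.2.2 = z} s z (fun ω => Iff.rfl),
    pr_coord Ps {ω | s ω.1 ω.2.1 ω.2.2.1} s (fun ω => Iff.rfl)]
  simp only [Finset.sum_mul]
  refine Finset.sum_congr rfl fun a _ => Finset.sum_congr rfl fun b _ =>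
    Finset.sum_congr rfl fun g _ => ?_
  by_cases hs : s a b g
  · rw [if_pos hs, if_pos hs]
    exact iv_pmf hIV a b g z
  · rw [if_neg hs, if_neg hs, zero_mul]

end Aux2
section Aux3

variable {Y : Finset ℝ} {K : ℕ}

lemma sum_marg_true (Ps : Dist (Prim Y K)) (y : Y) (z : Fin K) :
    (∑ y0 : Y, ∑ d1 : Bool, marginal Ps z y0 y true d1)
      = Ps.pr {ω | ω.2.1 = y ∧ ω.2.2.1 z false = true} := by
  have hin : ∀ y0 : Y, (∑ d1 : Bool, marginal Ps z y0 y true d1)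
      = Ps.pr {ω | ω.1 = y0 ∧ ω.2.1 = y ∧ pd ω z false = true} := by
    intro y0
    exact sum_pr_classify Ps
      (fun d1 => {ω | ω.1 = y0 ∧ ω.2.1 = y ∧ pd ω z false = true ∧ pd ω z true = d1})
      {ω | ω.1 = y0 ∧ ω.2.1 = y ∧ pd ω z false = true} (fun ω => pd ω z true)
      (fun x b => by simp only [Set.mem_setOf_eq]; tauto)
  rw [Finset.sum_congr rfl fun y0 _ => hin y0]
  rw [sum_pr_classify Ps (fun y0 => {ω | ω.1 = y0 ∧ ω.2.1 = y ∧ pd ω z false = true})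
      {ω | ω.2.1 = y ∧ pd ω z false = true} (fun ω => ω.1)
      (fun x b => by simp only [Set.mem_setOf_eq]; tauto)]
  exact pr_congr fun x => Iff.rfl

lemma sum_marg_false (Ps : Dist (Prim Y K)) (y : Y) (z : Fin K) :
    (∑ y1 : Y, ∑ d1 : Bool, marginal Ps z y y1 false d1)
      = Ps.pr {ω | ω.1 = y ∧ ω.2.2.1 z false = false} := by
  have hin : ∀ y1 : Y, (∑ d1 : Bool, marginal Ps z y y1 false d1)
      = Ps.pr {ω | ω.1 = y ∧ ω.2.1 = y1 ∧ pd ω z false = false} := by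
    intro y1
    exact sum_pr_classify Ps
      (fun d1 => {ω | ω.1 = y ∧ ω.2.1 = y1 ∧ pd ω z false = false ∧ pd ω z true = d1})
      {ω | ω.1 = y ∧ ω.2.1 = y1 ∧ pd ω z false = false} (fun ω => pd ω z true)
      (fun x b => by simp only [Set.mem_setOf_eq]; tauto)
  rw [Finset.sum_congr rfl fun y1 _ => hin y1]
  rw [sum_pr_classify Ps (fun y1 => {ω | ω.1 = y ∧ ω.2.1 = y1 ∧ pd ω z false = false})
      {ω | ω.1 = y ∧ pd ω z false = false} (fun ω => ω.2.1)
      (fun x b => by simp only [Set.mem_setOf_eq]; tauto)]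
  exact pr_congr fun x => Iff.rfl

lemma sum_marg_d (Ps : Dist (Prim Y K)) (y0 y1 : Y) (z : Fin K) :
    (∑ d0 : Bool, ∑ d1 : Bool, marginal Ps z y0 y1 d0 d1)
      = Ps.pr {ω | ω.1 = y0 ∧ ω.2.1 = y1} := by
  have hin : ∀ d0 : Bool, (∑ d1 : Bool, marginal Ps z y0 y1 d0 d1)
      = Ps.pr {ω | ω.1 = y0 ∧ ω.2.1 = y1 ∧ pd ω z false = d0} := by
    intro d0
    exact sum_pr_classify Ps
      (fun d1 => {ω | ω.1 = y0 ∧ ω.2.1 = y1 ∧ pd ω z false = d0 ∧ pd ω z true = d1})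
      {ω | ω.1 = y0 ∧ ω.2.1 = y1 ∧ pd ω z false = d0} (fun ω => pd ω z true)
      (fun x b => by simp only [Set.mem_setOf_eq]; tauto)
  rw [Finset.sum_congr rfl fun d0 _ => hin d0]
  exact sum_pr_classify Ps (fun d0 => {ω | ω.1 = y0 ∧ ω.2.1 = y1 ∧ pd ω z false = d0})
      {ω | ω.1 = y0 ∧ ω.2.1 = y1} (fun ω => pd ω z false)
      (fun x b => by simp only [Set.mem_setOf_eq]; tauto)

lemma hset_true (y : Y) (z : Fin K) :
    {ω : Prim Y K | obsY ω = y ∧ obsD ω = true ∧ pz ω = z}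
      = {ω | (ω.2.1 = y ∧ ω.2.2.1 z false = true) ∧ ω.2.2.2 = z} := by
  ext ω
  simp only [Set.mem_setOf_eq, obsY, pd, pz]
  constructor
  · rintro ⟨h1, h2, h3⟩
    subst h3
    rw [if_pos h2] at h1
    exact ⟨⟨h1, h2⟩, rfl⟩
  · rintro ⟨⟨h1, h2⟩, h3⟩
    subst h3
    exact ⟨by rw [if_pos (show obsD ω = true from h2)]; exact h1, h2, rfl⟩

lemma hset_false (y : Y) (z : Fin K) :
    {ω : Prim Y K | obsY ω = y ∧ obsD ω = false ∧ pz ω = z}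
      = {ω | (ω.1 = y ∧ ω.2.2.1 z false = false) ∧ ω.2.2.2 = z} := by
  ext ω
  simp only [Set.mem_setOf_eq, obsY, pd, pz]
  constructor
  · rintro ⟨h1, h2, h3⟩
    subst h3
    rw [if_neg (by simp [h2])] at h1
    exact ⟨⟨h1, h2⟩, rfl⟩
  · rintro ⟨⟨h1, h2⟩, h3⟩
    subst h3
    exact ⟨by rw [if_neg (show ¬obsD ω = true by simp [obsD, pd, pz, h2])]; exact h1, h2, rfl⟩

lemma obs_true {Ps : Dist (Prim Y K)} (hIV : IVvalid Ps) (y : Y) (z : Fin K) :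
    Ps.pr {ω | obsY ω = y ∧ obsD ω = true ∧ pz ω = z}
      = (∑ y0 : Y, ∑ d1 : Bool, marginal Ps z y0 y true d1) * Ps.pr {ω | ω.2.2.2 = z} := by
  rw [hset_true y z, sum_marg_true Ps y z]
  exact pr_cond_z hIV (fun a b g => b = y ∧ g z false = true) z

lemma obs_false {Ps : Dist (Prim Y K)} (hIV : IVvalid Ps) (y : Y) (z : Fin K) :
    Ps.pr {ω | obsY ω = y ∧ obsD ω = false ∧ pz ω = z}
      = (∑ y1 : Y, ∑ d1 : Bool, marginal Ps z y y1 false d1) * Ps.pr {ω | ω.2.2.2 = z} := by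
  rw [hset_false y z, sum_marg_false Ps y z]
  exact pr_cond_z hIV (fun a b g => a = y ∧ g z false = false) z

lemma obs_pt (P : Dist (Obs Y K)) (y : Y) (d : Bool) (z : Fin K) :
    P.pr {o | o.1 = y ∧ o.2.1 = d ∧ o.2.2 = z} = P.p (y, d, z) := by
  refine pr_single P _ _ fun x => ?_
  constructor
  · rintro ⟨h1, h2, h3⟩
    obtain ⟨x1, x2, x3⟩ := x
    simp_all
  · rintro rfl
    exact ⟨rfl, rfl, rfl⟩

lemma prZ_eq {Ps : Dist (Prim Y K)} {P : Dist (Obs Y K)} (hgen : generates Ps P) (z : Fin K) :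
    prZ P z = Ps.pr {ω | ω.2.2.2 = z} := by
  have step1 : prZ P z = ∑ y : Y, ∑ d : Bool, P.p (y, d, z) := by
    unfold prZ
    rw [← sum_pr_classify P (fun y => {o : Obs Y K | o.2.2 = z ∧ o.1 = y})
        {o | o.2.2 = z} (fun o => o.1) (fun x b => Iff.rfl)]
    refine Finset.sum_congr rfl fun y _ => ?_
    rw [← sum_pr_classify P (fun d => {o : Obs Y K | (o.2.2 = z ∧ o.1 = y) ∧ o.2.1 = d})
        {o | o.2.2 = z ∧ o.1 = y} (fun o => o.2.1) (fun x b => Iff.rfl)]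
    refine Finset.sum_congr rfl fun d _ => ?_
    rw [← obs_pt P y d z]
    exact pr_congr fun x => by simp only [Set.mem_setOf_eq]; tauto
  rw [step1]
  rw [Finset.sum_congr rfl fun y (_ : y ∈ Finset.univ) =>
    Finset.sum_congr rfl fun d (_ : d ∈ Finset.univ) => hgen y d z]
  rw [Finset.sum_congr rfl fun y (_ : y ∈ Finset.univ) =>
    sum_pr_classify Ps (fun d => {ω | obsY ω = y ∧ obsD ω = d ∧ pz ω = z})
      {ω | obsY ω = y ∧ pz ω = z} obsD
      (fun x b => by simp only [Set.mem_setOf_eq]; tauto)]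
  rw [sum_pr_classify Ps (fun y => {ω | obsY ω = y ∧ pz ω = z})
      {ω | pz ω = z} obsY (fun x b => by simp only [Set.mem_setOf_eq]; tauto)]
  exact pr_congr fun x => Iff.rfl

lemma prZ_sum (P : Dist (Obs Y K)) : ∑ z : Fin K, prZ P z = 1 := by
  unfold prZ
  rw [sum_pr_classify P (fun z => {o | o.2.2 = z}) Set.univ (fun o => o.2.2)
      (fun x b => by simp only [Set.mem_setOf_eq, Set.mem_univ, true_and])]
  exact pr_univ P

lemma prZ_nonneg (P : Dist (Obs Y K)) (z : Fin K) : 0 ≤ prZ P z := by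
  unfold prZ
  exact pr_nonneg P _

end Aux3
section Aux4

variable {Y : Finset ℝ} {K : ℕ} [NeZero K]

/-- Common distribution of potential outcomes implied by the collection. -/
noncomputable def bq (π : Fin K → Y → Y → Bool → Bool → ℝ) (a b : Y) : ℝ :=
  ∑ d0 : Bool, ∑ d1 : Bool, π 0 a b d0 d1

/-- Joint pmf of `(Y(0), Y(1), D(·,·))` for the constructed primitive distribution:
conditionally on the potential outcomes, the treatment maps are independent across judges. -/
noncomputable def bf (π : Fin K → Y → Y → Bool → Bool → ℝ) (a b : Y)
    (g : Fin K → Bool → Bool) : ℝ :=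
  if bq π a b = 0 then 0
  else bq π a b * ∏ w : Fin K, (π w a b (g w false) (g w true) / bq π a b)

/-- Auxiliary factor used to compute constrained sums of `bf`. -/
noncomputable def bH (π : Fin K → Y → Y → Bool → Bool → ℝ) (a b : Y) (z : Fin K)
    (d0 d1 : Bool) (w : Fin K) (t : Bool → Bool) : ℝ :=
  if w = z ∧ ¬(t false = d0 ∧ t true = d1) then 0
  else π w a b (t false) (t true) / bq π a b

/-- Pmf of the constructed primitive distribution. -/
noncomputable def bp (P : Dist (Obs Y K)) (π : Fin K → Y → Y → Bool → Bool → ℝ) :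
    Prim Y K → ℝ :=
  fun ω => prZ P ω.2.2.2 * bf π ω.1 ω.2.1 ω.2.2.1

variable (π : Fin K → Y → Y → Bool → Bool → ℝ)

lemma bq_eq
    (hcom : ∀ (y0 y1 : Y) (z : Fin K),
      (∑ d0 : Bool, ∑ d1 : Bool, π z y0 y1 d0 d1) = ∑ d0 : Bool, ∑ d1 : Bool, π 0 y0 y1 d0 d1)
    (z : Fin K) (a b : Y) :
    (∑ d0 : Bool, ∑ d1 : Bool, π z a b d0 d1) = bq π a b :=
  hcom a b z

lemma bq_nonneg (hnn : ∀ (z : Fin K) (y0 y1 : Y) (d0 d1 : Bool), 0 ≤ π z y0 y1 d0 d1)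
    (a b : Y) : 0 ≤ bq π a b :=
  Finset.sum_nonneg fun d0 _ => Finset.sum_nonneg fun d1 _ => hnn 0 a b d0 d1

lemma pi_le_bq
    (hcom : ∀ (y0 y1 : Y) (z : Fin K),
      (∑ d0 : Bool, ∑ d1 : Bool, π z y0 y1 d0 d1) = ∑ d0 : Bool, ∑ d1 : Bool, π 0 y0 y1 d0 d1)
    (hnn : ∀ (z : Fin K) (y0 y1 : Y) (d0 d1 : Bool), 0 ≤ π z y0 y1 d0 d1)
    (z : Fin K) (a b : Y) (d0 d1 : Bool) : π z a b d0 d1 ≤ bq π a b := by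
  rw [← bq_eq π hcom z a b]
  calc π z a b d0 d1 ≤ ∑ d1' : Bool, π z a b d0 d1' :=
        Finset.single_le_sum (fun i _ => hnn z a b d0 i) (Finset.mem_univ d1)
    _ ≤ ∑ d0' : Bool, ∑ d1' : Bool, π z a b d0' d1' :=
        Finset.single_le_sum (f := fun d0' => ∑ d1' : Bool, π z a b d0' d1')
          (fun i _ => Finset.sum_nonneg fun j _ => hnn z a b i j) (Finset.mem_univ d0)

lemma bq_zero
    (hcom : ∀ (y0 y1 : Y) (z : Fin K),
      (∑ d0 : Bool, ∑ d1 : Bool, π z y0 y1 d0 d1) = ∑ d0 : Bool, ∑ d1 : Bool, π 0 y0 y1 d0 d1)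
    (hnn : ∀ (z : Fin K) (y0 y1 : Y) (d0 d1 : Bool), 0 ≤ π z y0 y1 d0 d1)
    (z : Fin K) (a b : Y) (d0 d1 : Bool) (hq : bq π a b = 0) : π z a b d0 d1 = 0 :=
  le_antisymm (hq ▸ pi_le_bq π hcom hnn z a b d0 d1) (hnn z a b d0 d1)

lemma bf_nonneg (hnn : ∀ (z : Fin K) (y0 y1 : Y) (d0 d1 : Bool), 0 ≤ π z y0 y1 d0 d1)
    (a b : Y) (g : Fin K → Bool → Bool) : 0 ≤ bf π a b g := by
  unfold bf
  split
  · exact le_refl 0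
  · exact mul_nonneg (bq_nonneg π hnn a b)
      (Finset.prod_nonneg fun w _ => div_nonneg (hnn w a b _ _) (bq_nonneg π hnn a b))

lemma bf_unfold {a b : Y} (hq : bq π a b ≠ 0) (g : Fin K → Bool → Bool) :
    bf π a b g = bq π a b * ∏ w : Fin K, (π w a b (g w false) (g w true) / bq π a b) :=
  if_neg hq

lemma bH_of_ne {a b : Y} {z w : Fin K} {d0 d1 : Bool} (hw : w ≠ z) (t : Bool → Bool) :
    bH π a b z d0 d1 w t = π w a b (t false) (t true) / bq π a b :=
  if_neg (by simp [hw])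

lemma bH_z_match {a b : Y} {z : Fin K} {d0 d1 : Bool} {t : Bool → Bool}
    (hc : t false = d0 ∧ t true = d1) :
    bH π a b z d0 d1 z t = π z a b (t false) (t true) / bq π a b :=
  if_neg (by simp [hc])

lemma bH_z_nomatch {a b : Y} {z : Fin K} {d0 d1 : Bool} {t : Bool → Bool}
    (hc : ¬(t false = d0 ∧ t true = d1)) :
    bH π a b z d0 d1 z t = 0 :=
  if_pos ⟨rfl, hc⟩

lemma bH_sum_ne
    (hcom : ∀ (y0 y1 : Y) (z : Fin K),
      (∑ d0 : Bool, ∑ d1 : Bool, π z y0 y1 d0 d1) = ∑ d0 : Bool, ∑ d1 : Bool, π 0 y0 y1 d0 d1)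
    {a b : Y} {z w : Fin K} {d0 d1 : Bool} (hw : w ≠ z) (hq : bq π a b ≠ 0) :
    (∑ t : Bool → Bool, bH π a b z d0 d1 w t) = 1 := by
  rw [Finset.sum_congr rfl fun t _ => bH_of_ne π hw t]
  rw [show (∑ t : Bool → Bool, π w a b (t false) (t true) / bq π a b)
      = (∑ t : Bool → Bool, π w a b (t false) (t true)) / bq π a b from
    (Finset.sum_div _ _ _).symm]
  rw [sum_boolfun (fun x y => π w a b x y), bq_eq π hcom w a b]
  exact div_self hq

lemma bH_sum_z {a b : Y} {z : Fin K} {d0 d1 : Bool} :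
    (∑ t : Bool → Bool, bH π a b z d0 d1 z t) = π z a b d0 d1 / bq π a b := by
  have hval : ∀ t : Bool → Bool, bH π a b z d0 d1 z t
      = (fun x y : Bool => if x = d0 ∧ y = d1 then π z a b x y / bq π a b else 0)
          (t false) (t true) := by
    intro t
    by_cases hc : t false = d0 ∧ t true = d1
    · rw [bH_z_match π hc]
      exact (if_pos hc).symm
    · rw [bH_z_nomatch π hc]
      exact (if_neg hc).symm
  rw [Finset.sum_congr rfl fun t _ => hval t,
    sum_boolfun (fun x y : Bool => if x = d0 ∧ y = d1 then π z a b x y / bq π a b else 0)]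
  rw [Finset.sum_congr rfl fun x (_ : x ∈ Finset.univ) =>
    sum_ite_single d1 (fun y => x = d0 ∧ y = d1) (fun y => π z a b x y / bq π a b)
      (fun y hy => hy.2)]
  rw [sum_ite_single d0 (fun x => x = d0 ∧ d1 = d1) (fun x => π z a b x d1 / bq π a b)
      (fun x hx => hx.1)]
  rw [if_pos ⟨rfl, rfl⟩]

lemma bf_step {a b : Y} (hq : bq π a b ≠ 0) (z : Fin K) (d0 d1 : Bool)
    (g : Fin K → Bool → Bool) :
    (if g z false = d0 ∧ g z true = d1 then bf π a b g else 0)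
      = bq π a b * ∏ w, bH π a b z d0 d1 w (g w) := by
  by_cases hc : g z false = d0 ∧ g z true = d1
  · rw [if_pos hc, bf_unfold π hq g]
    congr 1
    refine Finset.prod_congr rfl fun w _ => ?_
    by_cases hw : w = z
    · subst hw
      exact (bH_z_match π hc).symm
    · exact (bH_of_ne π hw (g w)).symm
  · rw [if_neg hc]
    rw [Finset.prod_eq_zero (Finset.mem_univ z) (bH_z_nomatch π hc), mul_zero]

lemma bf_key
    (hcom : ∀ (y0 y1 : Y) (z : Fin K),
      (∑ d0 : Bool, ∑ d1 : Bool, π z y0 y1 d0 d1) = ∑ d0 : Bool, ∑ d1 : Bool, π 0 y0 y1 d0 d1)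
    (hnn : ∀ (z : Fin K) (y0 y1 : Y) (d0 d1 : Bool), 0 ≤ π z y0 y1 d0 d1)
    (a b : Y) (z : Fin K) (d0 d1 : Bool) :
    (∑ g : Fin K → Bool → Bool, if g z false = d0 ∧ g z true = d1 then bf π a b g else 0)
      = π z a b d0 d1 := by
  by_cases hq : bq π a b = 0
  · rw [Finset.sum_eq_zero fun g _ => by simp only [bf, if_pos hq, ite_self]]
    exact (bq_zero π hcom hnn z a b d0 d1 hq).symm
  · rw [Finset.sum_congr rfl fun g _ => bf_step π hq z d0 d1 g, ← Finset.mul_sum]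
    rw [← Fintype.prod_sum (bH π a b z d0 d1)]
    have hws : ∀ w : Fin K, (∑ t : Bool → Bool, bH π a b z d0 d1 w t)
        = if w = z then π z a b d0 d1 / bq π a b else 1 := by
      intro w
      by_cases hw : w = z
      · subst hw
        rw [if_pos rfl]
        exact bH_sum_z π
      · rw [if_neg hw]
        exact bH_sum_ne π hcom hw hq
    rw [Finset.prod_congr rfl fun w _ => hws w]
    rw [Finset.prod_eq_single z (fun w _ hw => if_neg hw)
      (fun h => absurd (Finset.mem_univ z) h), if_pos rfl]
    rw [mul_comm, div_mul_cancel₀ _ hq]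

lemma bf_sum
    (hcom : ∀ (y0 y1 : Y) (z : Fin K),
      (∑ d0 : Bool, ∑ d1 : Bool, π z y0 y1 d0 d1) = ∑ d0 : Bool, ∑ d1 : Bool, π 0 y0 y1 d0 d1)
    (a b : Y) :
    (∑ g : Fin K → Bool → Bool, bf π a b g) = bq π a b := by
  by_cases hq : bq π a b = 0
  · rw [Finset.sum_eq_zero fun g _ => by simp only [bf, if_pos hq], hq]
  · rw [Finset.sum_congr rfl fun g _ => bf_unfold π hq g, ← Finset.mul_sum]
    rw [← Fintype.prod_sum (fun w (t : Bool → Bool) => π w a b (t false) (t true) / bq π a b)]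
    have hws : ∀ w : Fin K,
        (∑ t : Bool → Bool, π w a b (t false) (t true) / bq π a b) = 1 := by
      intro w
      rw [show (∑ t : Bool → Bool, π w a b (t false) (t true) / bq π a b)
          = (∑ t : Bool → Bool, π w a b (t false) (t true)) / bq π a b from
        (Finset.sum_div _ _ _).symm]
      rw [sum_boolfun (fun x y => π w a b x y), bq_eq π hcom w a b]
      exact div_self hq
    rw [Finset.prod_congr rfl fun w _ => hws w, Finset.prod_const_one, mul_one]

lemma sum3_collapse {β₁ β₂ γ : Type*} [Fintype β₁] [Fintype β₂] [Fintype γ]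
    (a0 : β₁) (b0 : β₂) (s : β₁ → β₂ → γ → Prop) [∀ a b g, Decidable (s a b g)]
    (h : ∀ a b g, s a b g → a = a0 ∧ b = b0) (F : β₁ → β₂ → γ → ℝ) :
    (∑ a : β₁, ∑ b : β₂, ∑ g : γ, if s a b g then F a b g else 0)
      = ∑ g : γ, if s a0 b0 g then F a0 b0 g else 0 := by
  have inner : ∀ a b, (∑ g : γ, if s a b g then F a b g else 0)
      = if a = a0 ∧ b = b0 then ∑ g : γ, if s a b g then F a b g else 0 else 0 := by
    intro a b
    by_cases hab : a = a0 ∧ b = b0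
    · rw [if_pos hab]
    · rw [if_neg hab]
      exact Finset.sum_eq_zero fun g _ => if_neg fun hs => hab (h a b g hs)
  rw [Finset.sum_congr rfl fun a (_ : a ∈ Finset.univ) =>
    Finset.sum_congr rfl fun b (_ : b ∈ Finset.univ) => inner a b]
  have inner2 : ∀ a : β₁,
      (∑ b : β₂, if a = a0 ∧ b = b0 then ∑ g : γ, if s a b g then F a b g else 0 else 0)
        = if a = a0 then ∑ g : γ, if s a b0 g then F a b0 g else 0 else 0 := by
    intro a
    by_cases ha : a = a0
    · rw [sum_ite_single b0 (fun b => a = a0 ∧ b = b0)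
        (fun b => ∑ g : γ, if s a b g then F a b g else 0) (fun b hb => hb.2)]
      rw [if_pos ⟨ha, rfl⟩, if_pos ha]
    · rw [if_neg ha]
      exact Finset.sum_eq_zero fun b _ => if_neg fun hc => ha hc.1
  rw [Finset.sum_congr rfl fun a (_ : a ∈ Finset.univ) => inner2 a]
  rw [sum_ite_single a0 (fun a => a = a0)
    (fun a => ∑ g : γ, if s a b0 g then F a b0 g else 0) (fun a ha => ha)]
  rw [if_pos rfl]

end Aux4
section Aux5

variable {Y : Finset ℝ} {K : ℕ} [NeZero K]

variable (π : Fin K → Y → Y → Bool → Bool → ℝ)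

lemma bp_nonneg (P : Dist (Obs Y K))
    (hnn : ∀ (z : Fin K) (y0 y1 : Y) (d0 d1 : Bool), 0 ≤ π z y0 y1 d0 d1)
    (ω : Prim Y K) : 0 ≤ bp P π ω :=
  mul_nonneg (prZ_nonneg P ω.2.2.2) (bf_nonneg π hnn ω.1 ω.2.1 ω.2.2.1)

lemma bp_sum_one (P : Dist (Obs Y K))
    (hcom : ∀ (y0 y1 : Y) (z : Fin K),
      (∑ d0 : Bool, ∑ d1 : Bool, π z y0 y1 d0 d1) = ∑ d0 : Bool, ∑ d1 : Bool, π 0 y0 y1 d0 d1)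
    (hq1 : (∑ a : Y, ∑ b : Y, bq π a b) = 1) :
    (∑ ω : Prim Y K, bp P π ω) = 1 := by
  have expand : (∑ ω : Prim Y K, bp P π ω)
      = ∑ a : Y, ∑ b : Y, ∑ g : Fin K → Bool → Bool, ∑ w : Fin K, prZ P w * bf π a b g := by
    simp only [Fintype.sum_prod_type]
    rfl
  rw [expand]
  rw [Finset.sum_congr rfl fun a (_ : a ∈ Finset.univ) =>
    Finset.sum_congr rfl fun b (_ : b ∈ Finset.univ) =>
    Finset.sum_congr rfl fun g (_ : g ∈ Finset.univ) =>
    (by rw [← Finset.sum_mul, prZ_sum P, one_mul] :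
      (∑ w : Fin K, prZ P w * bf π a b g) = bf π a b g)]
  rw [Finset.sum_congr rfl fun a (_ : a ∈ Finset.univ) =>
    Finset.sum_congr rfl fun b (_ : b ∈ Finset.univ) => bf_sum π hcom a b]
  exact hq1

end Aux5
/-- Proposition 1: a collection `{π_z}` arises as the collection of
marginal pmfs of some IV-valid primitive distribution generating the data `P`
if and only if it matches the data, implies a common distribution of the potential
outcomes, and consists of valid pmfs. -/
theorem statement0 {Y : Finset ℝ} {K : ℕ} [NeZero K]
    (P : Dist (Obs Y K)) (hPz : ∀ z : Fin K, 0 < prZ P z)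
    (π : Fin K → Y → Y → Bool → Bool → ℝ) :
    (∃ Ps : Dist (Prim Y K), IVvalid Ps ∧ generates Ps P ∧
        ∀ (z : Fin K) (y0 y1 : Y) (d0 d1 : Bool),
          marginal Ps z y0 y1 d0 d1 = π z y0 y1 d0 d1) ↔
      ((∀ (y : Y) (z : Fin K),
          obsCond P y true z = ∑ y0 : Y, ∑ d1 : Bool, π z y0 y true d1) ∧
        (∀ (y : Y) (z : Fin K),
          obsCond P y false z = ∑ y1 : Y, ∑ d1 : Bool, π z y y1 false d1) ∧
        (∀ (y0 y1 : Y) (z : Fin K),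
          ∑ d0 : Bool, ∑ d1 : Bool, π z y0 y1 d0 d1
            = ∑ d0 : Bool, ∑ d1 : Bool, π 0 y0 y1 d0 d1) ∧
        (∀ (z : Fin K) (y0 y1 : Y) (d0 d1 : Bool), 0 ≤ π z y0 y1 d0 d1) ∧
        (∀ z : Fin K,
          ∑ y0 : Y, ∑ y1 : Y, ∑ d0 : Bool, ∑ d1 : Bool, π z y0 y1 d0 d1 = 1)) := by
  constructor
  · rintro ⟨Ps, hIV, hgen, hmar⟩
    have hprz : ∀ z : Fin K, prZ P z = Ps.pr {ω | ω.2.2.2 = z} := prZ_eq hgen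
    have hzne : ∀ z : Fin K, Ps.pr {ω | ω.2.2.2 = z} ≠ 0 := fun z =>
      ne_of_gt (hprz z ▸ hPz z)
    refine ⟨?_, ?_, ?_, ?_, ?_⟩
    · intro y z
      unfold obsCond
      rw [hgen y true z, obs_true hIV y z, hprz z,
        mul_div_assoc, div_self (hzne z), mul_one]
      exact Finset.sum_congr rfl fun y0 _ => Finset.sum_congr rfl fun d1 _ => hmar z y0 y true d1
    · intro y z
      unfold obsCond
      rw [hgen y false z, obs_false hIV y z, hprz z,
        mul_div_assoc, div_self (hzne z), mul_one]
      exact Finset.sum_congr rfl fun y1 _ => Finset.sum_congr rfl fun d1 _ => hmar z y y1 false d1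
    · intro y0 y1 z
      simp only [← hmar]
      rw [sum_marg_d Ps y0 y1 z, sum_marg_d Ps y0 y1 0]
    · intro z y0 y1 d0 d1
      rw [← hmar]
      exact pr_nonneg Ps _
    · intro z
      simp only [← hmar]
      rw [Finset.sum_congr rfl fun y0 (_ : y0 ∈ Finset.univ) =>
        Finset.sum_congr rfl fun y1 (_ : y1 ∈ Finset.univ) => sum_marg_d Ps y0 y1 z]
      rw [Finset.sum_congr rfl fun y0 (_ : y0 ∈ Finset.univ) =>
        sum_pr_classify Ps (fun y1 => {ω | ω.1 = y0 ∧ ω.2.1 = y1}) {ω | ω.1 = y0}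
          (fun ω => ω.2.1) (fun x b => Iff.rfl)]
      rw [sum_pr_classify Ps (fun y0 => {ω | ω.1 = y0}) Set.univ (fun ω => ω.1)
        (fun x b => by simp only [Set.mem_setOf_eq, Set.mem_univ, true_and])]
      exact pr_univ Ps
  · rintro ⟨h1, h2, h3, h4, h5⟩
    have hq1 : (∑ a : Y, ∑ b : Y, bq π a b) = 1 := h5 0
    set Ps : Dist (Prim Y K) := ⟨bp P π, bp_nonneg π P h4, bp_sum_one π P h3 hq1⟩ with hPsdef
    have hpmf : ∀ (a b : Y) (g : Fin K → Bool → Bool) (w : Fin K),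
        Ps.p (a, b, g, w) = prZ P w * bf π a b g := fun _ _ _ _ => rfl
    have hsw : ∀ (a b : Y) (g : Fin K → Bool → Bool),
        (∑ w : Fin K, Ps.p (a, b, g, w)) = bf π a b g := by
      intro a b g
      rw [Finset.sum_congr rfl fun w (_ : w ∈ Finset.univ) => hpmf a b g w]
      rw [← Finset.sum_mul, prZ_sum P, one_mul]
    have hprzz : ∀ z : Fin K, Ps.pr {ω | ω.2.2.2 = z} = prZ P z := by
      intro z
      rw [pr_coordz Ps {ω | ω.2.2.2 = z} (fun _ _ _ => True) z
        (fun ω => by simp only [Set.mem_setOf_eq, true_and])]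
      simp only [if_true]
      rw [Finset.sum_congr rfl fun a (_ : a ∈ Finset.univ) =>
        Finset.sum_congr rfl fun b (_ : b ∈ Finset.univ) =>
        Finset.sum_congr rfl fun g (_ : g ∈ Finset.univ) => hpmf a b g z]
      rw [Finset.sum_congr rfl fun a (_ : a ∈ Finset.univ) =>
        Finset.sum_congr rfl fun b (_ : b ∈ Finset.univ) =>
        (Finset.mul_sum _ _ _).symm]
      rw [Finset.sum_congr rfl fun a (_ : a ∈ Finset.univ) =>
        Finset.sum_congr rfl fun b (_ : b ∈ Finset.univ) =>
        (by rw [bf_sum π h3 a b] :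
          prZ P z * (∑ g : Fin K → Bool → Bool, bf π a b g) = prZ P z * bq π a b)]
      rw [Finset.sum_congr rfl fun a (_ : a ∈ Finset.univ) => (Finset.mul_sum _ _ _).symm]
      rw [← Finset.mul_sum, hq1, mul_one]
    have hIV : IVvalid Ps := by
      intro a b g z
      rw [pr_abgz, pr_abg, hprzz z, hsw a b g]
      exact (hpmf a b g z).trans (mul_comm _ _)
    have hmarg : ∀ (z : Fin K) (y0 y1 : Y) (d0 d1 : Bool),
        marginal Ps z y0 y1 d0 d1 = π z y0 y1 d0 d1 := by
      intro z y0 y1 d0 d1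
      unfold marginal
      rw [pr_coord Ps {ω | ω.1 = y0 ∧ ω.2.1 = y1 ∧ pd ω z false = d0 ∧ pd ω z true = d1}
        (fun a b g => a = y0 ∧ b = y1 ∧ g z false = d0 ∧ g z true = d1) (fun ω => Iff.rfl)]
      trans (∑ a : Y, ∑ b : Y, ∑ g : Fin K → Bool → Bool,
        if a = y0 ∧ b = y1 ∧ g z false = d0 ∧ g z true = d1 then bf π a b g else 0)
      · refine Finset.sum_congr rfl fun a _ => Finset.sum_congr rfl fun b _ =>
          Finset.sum_congr rfl fun g _ => ?_
        by_cases hs : a = y0 ∧ b = y1 ∧ g z false = d0 ∧ g z true = d1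
        · rw [if_pos hs, if_pos hs, hsw a b g]
        · rw [if_neg hs, if_neg hs]
      rw [sum3_collapse y0 y1
        (fun a b g => a = y0 ∧ b = y1 ∧ g z false = d0 ∧ g z true = d1)
        (fun a b g hs => ⟨hs.1, hs.2.1⟩) (fun a b g => bf π a b g)]
      refine Eq.trans (Finset.sum_congr rfl fun g _ => if_congr (by tauto) rfl rfl)
        (bf_key π h3 h4 y0 y1 z d0 d1)
    have hgen : generates Ps P := by
      intro y d z
      cases d
      · rw [obs_false hIV y z, hprzz z]
        rw [Finset.sum_congr rfl fun y1 (_ : y1 ∈ Finset.univ) =>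
          Finset.sum_congr rfl fun d1 (_ : d1 ∈ Finset.univ) => hmarg z y y1 false d1]
        rw [← h2 y z]
        unfold obsCond
        rw [div_mul_cancel₀ _ (ne_of_gt (hPz z))]
      · rw [obs_true hIV y z, hprzz z]
        rw [Finset.sum_congr rfl fun y0 (_ : y0 ∈ Finset.univ) =>
          Finset.sum_congr rfl fun d1 (_ : d1 ∈ Finset.univ) => hmarg z y0 y true d1]
        rw [← h1 y z]
        unfold obsCond
        rw [div_mul_cancel₀ _ (ne_of_gt (hPz z))]
    exact ⟨Ps, hIV, hgen, hmarg⟩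

end IVPol
end

section
/- Fix α ∈ [0,1] and an observed data distribution P with P(Z=z) > 0 for all z. Let 𝒫*_α be the set of primitive distributions satisfying IV validity, policy monotonicity, the α-average policy quota P*(D(Z,1)=1) = α, and the known-outcome condition P*(Y(0)=0) = 1. Let 𝒫*_{α,Mon} be the subset of 𝒫*_α whose elements additionally satisfy IV monotonicity. If the identified set Θ_I(P; 𝒫*_{α,Mon}) is nonempty, then Θ_I(P; 𝒫*_{α,Mon}) = Θ_I(P; 𝒫*_α); that is, imposing IV monotonicity has no identifying power. -/
open MeasureTheory

namespace IVM

/-- Sample space of model primitives `(Y(0), Y(1), D(·,·), Z)`: the two potential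
outcomes are real numbers, the potential treatments `D(z, a) ∈ {0,1}` are recorded
for every judge `z` and policy `a`, and `Z` is the instrument. -/
abbrev PrimM (K : ℕ) := ℝ × ℝ × (Fin K → Bool → Bool) × Fin K

/-- Sample space of the observed data `(Y, D, Z)`. -/
abbrev ObsM (K : ℕ) := ℝ × Bool × Fin K

variable {K : ℕ}

/-- Potential treatment `D(z, a)`. -/
def pd (ω : PrimM K) (z : Fin K) (a : Bool) : Bool := ω.2.2.1 z a

/-- The instrument `Z`. -/
def pz (ω : PrimM K) : Fin K := ω.2.2.2

/-- Observed treatment `D = D(Z, 0)`. -/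
def obsD (ω : PrimM K) : Bool := pd ω (pz ω) false

/-- Observed outcome `Y = Y(D(Z, 0))`. -/
noncomputable def obsY (ω : PrimM K) : ℝ := if obsD ω then ω.2.1 else ω.1

/-- Counterfactual outcome `Y(D(Z, 1))`. -/
noncomputable def cfY (ω : PrimM K) : ℝ := if pd ω (pz ω) true then ω.2.1 else ω.1

/-- The map from primitives to observed data `(Y, D, Z)`. -/
noncomputable def obsMap (ω : PrimM K) : ObsM K := (obsY ω, obsD ω, pz ω)

/-- IV validity: `(Y(0), Y(1), D(·,·))` is independent of `Z`. -/
def IVvalid (μ : Measure (PrimM K)) : Prop :=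
  ∀ (A : Set (ℝ × ℝ × (Fin K → Bool → Bool))) (z : Fin K), MeasurableSet A →
    μ {ω | (ω.1, ω.2.1, ω.2.2.1) ∈ A ∧ pz ω = z}
      = μ {ω | (ω.1, ω.2.1, ω.2.2.1) ∈ A} * μ {ω | pz ω = z}

/-- `μ` generates the observed data distribution `P`:
`P` is the law of `(Y(D(Z,0)), D(Z,0), Z)` under `μ`. -/
def generates (μ : Measure (PrimM K)) (P : Measure (ObsM K)) : Prop :=
  P = Measure.map obsMap μ

/-- Policy monotonicity: `D(z,1) ≥ D(z,0)` almost surely, for every judge `z`. -/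
def policyMono (μ : Measure (PrimM K)) : Prop :=
  ∀ z : Fin K, μ {ω | pd ω z false ≤ pd ω z true} = 1

/-- IV monotonicity: for every pair of judges, one is almost surely more lenient. -/
def ivMono (μ : Measure (PrimM K)) : Prop :=
  ∀ z z' : Fin K,
    μ {ω | pd ω z' false ≤ pd ω z false} = 1 ∨
    μ {ω | pd ω z false ≤ pd ω z' false} = 1

/-- The potential outcomes take values in the outcome set `𝒴` almost surely. -/
def suppY (𝒴 : Set ℝ) (μ : Measure (PrimM K)) : Prop :=
  μ {ω | ω.1 ∈ 𝒴 ∧ ω.2.1 ∈ 𝒴} = 1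

/-- The average counterfactual outcome `θ = E[Y(D(Z,1))]`. -/
noncomputable def theta (μ : Measure (PrimM K)) : ℝ := ∫ ω, cfY ω ∂μ

/-- The identified set for the average counterfactual outcome. -/
def ThetaI (P : Measure (ObsM K)) (fam : Set (Measure (PrimM K))) : Set ℝ :=
  {t | ∃ μ ∈ fam, generates μ P ∧ theta μ = t}

/-- The family `𝒫*_α`: probability distributions of the primitives satisfying IV
validity, policy monotonicity, outcomes supported in `𝒴`, the `α`-average policy
quota `P*(D(Z,1)=1) = α`, and the known-outcome condition `P*(Y(0)=0) = 1`. -/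
def famAlpha (K : ℕ) (𝒴 : Set ℝ) (α : ℝ) : Set (Measure (PrimM K)) :=
  {μ | IsProbabilityMeasure μ ∧ IVvalid μ ∧ policyMono μ ∧ suppY 𝒴 μ ∧
       μ {ω | pd ω (pz ω) true = true} = ENNReal.ofReal α ∧
       μ {ω | ω.1 = 0} = 1}

/-- The subfamily `𝒫*_{α,Mon}` whose elements additionally satisfy IV monotonicity. -/
def famAlphaMon (K : ℕ) (𝒴 : Set ℝ) (α : ℝ) : Set (Measure (PrimM K)) :=
  {μ ∈ famAlpha K 𝒴 α | ivMono μ}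


/-! ### Auxiliary development -/

set_option maxHeartbeats 2000000 in
set_option synthInstance.maxHeartbeats 1000000 in
theorem aux_dummy : True := trivial

set_option maxHeartbeats 2000000
set_option synthInstance.maxHeartbeats 1000000
set_option linter.unusedSectionVars false
set_option linter.unusedVariables false

open scoped ENNReal

section Aux

variable {K : ℕ}

/-- First potential outcome as projection. -/
def Y1 (ω : PrimM K) : ℝ := ω.2.1
def Y0 (ω : PrimM K) : ℝ := ω.1
def WW (ω : PrimM K) : ℝ × ℝ × (Fin K → Bool → Bool) := (ω.1, ω.2.1, ω.2.2.1)

lemma measurable_Y1 : Measurable (Y1 (K := K)) := measurable_fst.comp measurable_snd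
lemma measurable_Y0 : Measurable (Y0 (K := K)) := measurable_fst
lemma measurable_pz : Measurable (pz (K := K)) := measurable_snd.comp (measurable_snd.comp measurable_snd)
lemma measurable_DD : Measurable (fun ω : PrimM K => ω.2.2.1) := measurable_fst.comp (measurable_snd.comp measurable_snd)
lemma measurable_WW : Measurable (WW (K := K)) := measurable_fst.prodMk (measurable_Y1.prodMk measurable_DD)

lemma measurable_pd_zz (z : Fin K) (a : Bool) : Measurable (fun ω : PrimM K => pd ω z a) :=
  (Measurable.of_discrete (f := fun d : Fin K → Bool → Bool => d z a)).comp measurable_DD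

lemma measurable_pd_ev (a : Bool) : Measurable (fun ω : PrimM K => pd ω (pz ω) a) :=
  (Measurable.of_discrete (f := fun q : (Fin K → Bool → Bool) × Fin K => q.1 q.2 a)).comp
    (measurable_DD.prodMk measurable_pz)

lemma measurable_obsD : Measurable (obsD (K := K)) := measurable_pd_ev false

lemma measurable_obsY : Measurable (obsY (K := K)) := by
  unfold obsY
  exact Measurable.ite (measurableSet_eq_fun measurable_obsD measurable_const) measurable_Y1 measurable_Y0

lemma measurable_cfY : Measurable (cfY (K := K)) := by
  unfold cfY
  exact Measurable.ite (measurableSet_eq_fun (measurable_pd_ev true) measurable_const) measurable_Y1 measurable_Y0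

lemma measurable_obsMap : Measurable (obsMap (K := K)) :=
  measurable_obsY.prodMk (measurable_obsD.prodMk measurable_pz)

lemma measurableSet_pzz (z : Fin K) : MeasurableSet {ω : PrimM K | pz ω = z} :=
  measurable_pz (measurableSet_singleton z)

/-- The uniform measure on `[0,1]`. -/
noncomputable def unif : Measure ℝ := volume.restrict (Set.Icc (0:ℝ) 1)

instance : IsProbabilityMeasure unif := by
  constructor; simp [unif, Real.volume_Icc]

lemma unif_le (a : ℝ≥0∞) : unif {x | ENNReal.ofReal x ≤ a} = min a 1 := by
  rcases eq_or_ne a ⊤ with rfl | ha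
  · have : {x : ℝ | ENNReal.ofReal x ≤ ⊤} = Set.univ := by ext x; simp
    simp [this]
  · have h1 : {x : ℝ | ENNReal.ofReal x ≤ a} = Set.Iic a.toReal := by
      ext x; simp [ENNReal.ofReal_le_iff_le_toReal ha]
    rw [h1, unif, Measure.restrict_apply measurableSet_Iic]
    have h2 : Set.Iic a.toReal ∩ Set.Icc (0:ℝ) 1 = Set.Icc 0 (min a.toReal 1) := by
      ext x
      simp only [Set.mem_inter_iff, Set.mem_Iic, Set.mem_Icc, le_min_iff]
      tauto
    rw [h2, Real.volume_Icc]
    rcases le_total a 1 with h | h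
    · rw [min_eq_left h, min_eq_left (by simpa using ENNReal.toReal_mono (by simp) h)]
      simp [ENNReal.ofReal_toReal ha]
    · rw [min_eq_right h, min_eq_right (by simpa using ENNReal.toReal_mono ha h)]
      simp

lemma measurableSet_unifle (a : ℝ≥0∞) : MeasurableSet {x : ℝ | ENNReal.ofReal x ≤ a} :=
  measurableSet_le (ENNReal.measurable_ofReal) measurable_const

lemma unif_nle (a : ℝ≥0∞) : unif {x | ¬ ENNReal.ofReal x ≤ a} = 1 - min a 1 := by
  have : {x : ℝ | ¬ ENNReal.ofReal x ≤ a} = {x : ℝ | ENNReal.ofReal x ≤ a}ᶜ := rfl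
  rw [this, measure_compl (measurableSet_unifle a) (measure_ne_top _ _), unif_le]
  simp

/-- Product of two uniforms. -/
noncomputable def unif2 : Measure (ℝ × ℝ) := unif.prod unif

instance : IsProbabilityMeasure unif2 := by unfold unif2; infer_instance

lemma unif2_le1 (a : ℝ≥0∞) : unif2 {p : ℝ × ℝ | ENNReal.ofReal p.1 ≤ a} = min a 1 := by
  have : {p : ℝ × ℝ | ENNReal.ofReal p.1 ≤ a} = {x : ℝ | ENNReal.ofReal x ≤ a} ×ˢ Set.univ := by
    ext p; simp [Set.mem_prod]
  rw [this, unif2, Measure.prod_prod, unif_le]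
  simp

lemma unif2_nle1 (a : ℝ≥0∞) : unif2 {p : ℝ × ℝ | ¬ ENNReal.ofReal p.1 ≤ a} = 1 - min a 1 := by
  have : {p : ℝ × ℝ | ¬ ENNReal.ofReal p.1 ≤ a} = {x : ℝ | ¬ ENNReal.ofReal x ≤ a} ×ˢ Set.univ := by
    ext p; simp [Set.mem_prod]
  rw [this, unif2, Measure.prod_prod, unif_nle]
  simp

lemma unif2_or (a b : ℝ≥0∞) :
    unif2 {p : ℝ × ℝ | ENNReal.ofReal p.1 ≤ a ∨ ENNReal.ofReal p.2 ≤ b}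
      = min a 1 + (1 - min a 1) * min b 1 := by
  have hset : {p : ℝ × ℝ | ENNReal.ofReal p.1 ≤ a ∨ ENNReal.ofReal p.2 ≤ b}
      = ({x : ℝ | ENNReal.ofReal x ≤ a} ×ˢ (Set.univ : Set ℝ))
        ∪ ({x : ℝ | ¬ ENNReal.ofReal x ≤ a} ×ˢ {x : ℝ | ENNReal.ofReal x ≤ b}) := by
    ext p
    simp only [Set.mem_union, Set.mem_prod, Set.mem_setOf_eq, Set.mem_univ, and_true]
    tauto
  have hdisj : Disjoint ({x : ℝ | ENNReal.ofReal x ≤ a} ×ˢ (Set.univ : Set ℝ))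
      (({x : ℝ | ¬ ENNReal.ofReal x ≤ a} ×ˢ {x : ℝ | ENNReal.ofReal x ≤ b})) := by
    rw [Set.disjoint_left]
    rintro p ⟨h1, -⟩ ⟨h2, -⟩
    exact h2 h1
  rw [hset, measure_union hdisj (((measurableSet_unifle a).compl).prod (measurableSet_unifle b)),
    unif2, Measure.prod_prod, Measure.prod_prod, unif_le, unif_nle, unif_le]
  simp

/-- Radon–Nikodym monotonicity. -/
lemma rn_mono {ν1 ν2 L : Measure ℝ} [IsFiniteMeasure ν1] [IsFiniteMeasure ν2] [IsFiniteMeasure L]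
    (h1 : ν1 ≤ L) (h2 : ν2 ≤ L) (h12 : ν1 ≤ ν2) :
    ν1.rnDeriv L ≤ᵐ[L] ν2.rnDeriv L := by
  refine ae_le_of_forall_setLIntegral_le_of_sigmaFinite (Measure.measurable_rnDeriv _ _)
    (fun s hs _ => ?_)
  rw [Measure.setLIntegral_rnDeriv h1.absolutelyContinuous s,
    Measure.setLIntegral_rnDeriv h2.absolutelyContinuous s]
  exact h12 s

section LInt
variable {Q S T L : Measure ℝ} [IsFiniteMeasure Q] [IsFiniteMeasure S] [IsFiniteMeasure T]
  [IsFiniteMeasure L]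

lemma lint_min_rn (hQL : Q ≤ L) {B : Set ℝ} (hB : MeasurableSet B) :
    ∫⁻ y in B, min (Q.rnDeriv L y) 1 ∂L = Q B := by
  rw [← Measure.setLIntegral_rnDeriv hQL.absolutelyContinuous B]
  refine lintegral_congr_ae (ae_restrict_of_ae ?_)
  filter_upwards [Measure.rnDeriv_le_one_of_le hQL] with y hy
  simp [min_eq_left (by simpa using hy : Q.rnDeriv L y ≤ 1)]

lemma lint_one_sub_rn (hQS : Q + S = L) {B : Set ℝ} (hB : MeasurableSet B) :
    ∫⁻ y in B, (1 - min (Q.rnDeriv L y) 1) ∂L = S B := by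
  have hQL : Q ≤ L := by rw [← hQS]; exact Measure.le_add_right le_rfl
  have key : (∫⁻ y in B, (1 - min (Q.rnDeriv L y) 1) ∂L) + Q B = L B := by
    rw [← lint_min_rn hQL hB, ← lintegral_add_right _ ((Measure.measurable_rnDeriv _ _).min measurable_const)]
    have : ∀ y : ℝ, (1 - min (Q.rnDeriv L y) 1) + min (Q.rnDeriv L y) 1 = 1 := fun y =>
      tsub_add_cancel_of_le (min_le_right _ _)
    simp only [this]
    rw [setLIntegral_const, one_mul]
  have key2 : S B + Q B = L B := by
    rw [← hQS]; simp [add_comm]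
  have := key.trans key2.symm
  exact (ENNReal.add_left_inj (measure_ne_top Q B)).1 this

lemma lint_cross_rn (hQS : Q + S = L) (hTS : T ≤ S) {B : Set ℝ} (hB : MeasurableSet B) :
    ∫⁻ y in B, (1 - min (Q.rnDeriv L y) 1) * min (T.rnDeriv S y) 1 ∂L = T B := by
  have hSS : L.withDensity (fun y => 1 - min (Q.rnDeriv L y) 1) = S := by
    ext C hC
    rw [withDensity_apply _ hC, lint_one_sub_rn hQS hC]
  calc ∫⁻ y in B, (1 - min (Q.rnDeriv L y) 1) * min (T.rnDeriv S y) 1 ∂L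
      = ∫⁻ y in B, min (T.rnDeriv S y) 1 ∂(L.withDensity (fun y => 1 - min (Q.rnDeriv L y) 1)) :=
        (setLIntegral_withDensity_eq_setLIntegral_mul _
          (((Measure.measurable_rnDeriv _ _).min measurable_const).const_sub 1)
          ((Measure.measurable_rnDeriv _ _).min measurable_const) hB).symm
    _ = ∫⁻ y in B, min (T.rnDeriv S y) 1 ∂S := by rw [hSS]
    _ = T B := lint_min_rn hTS hB

end LInt

section Meas
variable (μ : Measure (PrimM K)) [IsProbabilityMeasure μ] (z : Fin K)

noncomputable def Lm : Measure ℝ := μ.map Y1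
noncomputable def Qm : Measure ℝ := (μ.restrict {ω | pd ω z false = true}).map Y1
noncomputable def Sm : Measure ℝ := (μ.restrict {ω | pd ω z false = false}).map Y1
noncomputable def Tm : Measure ℝ :=
  (μ.restrict {ω | pd ω z true = true ∧ pd ω z false = false}).map Y1

lemma msA : MeasurableSet {ω : PrimM K | pd ω z false = true} :=
  measurableSet_eq_fun (measurable_pd_zz z false) measurable_const
lemma msA' : MeasurableSet {ω : PrimM K | pd ω z false = false} :=
  measurableSet_eq_fun (measurable_pd_zz z false) measurable_const
lemma msT : MeasurableSet {ω : PrimM K | pd ω z true = true ∧ pd ω z false = false} :=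
  (measurableSet_eq_fun (measurable_pd_zz z true) measurable_const).inter (msA' z)

lemma Lm_apply {B : Set ℝ} (hB : MeasurableSet B) : Lm μ B = μ (Y1 ⁻¹' B) := by
  rw [Lm, Measure.map_apply measurable_Y1 hB]

lemma Qm_apply {B : Set ℝ} (hB : MeasurableSet B) : Qm μ z B = μ (Y1 ⁻¹' B ∩ {ω | pd ω z false = true}) := by
  rw [Qm, Measure.map_apply measurable_Y1 hB, Measure.restrict_apply (measurable_Y1 hB)]

lemma Sm_apply {B : Set ℝ} (hB : MeasurableSet B) : Sm μ z B = μ (Y1 ⁻¹' B ∩ {ω | pd ω z false = false}) := by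
  rw [Sm, Measure.map_apply measurable_Y1 hB, Measure.restrict_apply (measurable_Y1 hB)]

lemma Tm_apply {B : Set ℝ} (hB : MeasurableSet B) : Tm μ z B = μ (Y1 ⁻¹' B ∩ {ω | pd ω z true = true ∧ pd ω z false = false}) := by
  rw [Tm, Measure.map_apply measurable_Y1 hB, Measure.restrict_apply (measurable_Y1 hB)]

instance : IsProbabilityMeasure (Lm μ) := Measure.isProbabilityMeasure_map measurable_Y1.aemeasurable

instance : IsFiniteMeasure (Qm μ z) := by
  constructor
  rw [Qm_apply μ z MeasurableSet.univ]
  exact (measure_lt_top _ _)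

instance : IsFiniteMeasure (Sm μ z) := by
  constructor
  rw [Sm_apply μ z MeasurableSet.univ]
  exact (measure_lt_top _ _)

instance : IsFiniteMeasure (Tm μ z) := by
  constructor
  rw [Tm_apply μ z MeasurableSet.univ]
  exact (measure_lt_top _ _)

lemma Qm_add_Sm : Qm μ z + Sm μ z = Lm μ := by
  ext B hB
  rw [Measure.add_apply, Qm_apply μ z hB, Sm_apply μ z hB, Lm_apply μ hB]
  have h2 : Y1 ⁻¹' B ∩ {ω : PrimM K | pd ω z false = false}
      = Y1 ⁻¹' B \ {ω | pd ω z false = true} := by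
    ext ω
    cases h : pd ω z false <;> simp [Set.mem_diff, h]
  rw [h2]
  exact measure_inter_add_diff _ (msA z)

lemma Qm_le_Lm : Qm μ z ≤ Lm μ := by
  rw [← Qm_add_Sm μ z]; exact Measure.le_add_right le_rfl

lemma Tm_le_Sm : Tm μ z ≤ Sm μ z := by
  refine Measure.le_iff.2 fun B hB => ?_
  rw [Tm_apply μ z hB, Sm_apply μ z hB]
  exact measure_mono (by rintro ω ⟨h1, h2⟩; exact ⟨h1, h2.2⟩)

noncomputable def gf : ℝ → ℝ≥0∞ := (Qm μ z).rnDeriv (Lm μ)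
noncomputable def kf : ℝ → ℝ≥0∞ := (Tm μ z).rnDeriv (Sm μ z)

lemma measurable_gf : Measurable (gf μ z) := Measure.measurable_rnDeriv _ _
lemma measurable_kf : Measurable (kf μ z) := Measure.measurable_rnDeriv _ _

lemma lint_min_gf {B : Set ℝ} (hB : MeasurableSet B) :
    ∫⁻ y in B, min (gf μ z y) 1 ∂(Lm μ) = Qm μ z B :=
  lint_min_rn (Qm_le_Lm μ z) hB

lemma lint_one_sub_gf {B : Set ℝ} (hB : MeasurableSet B) :
    ∫⁻ y in B, (1 - min (gf μ z y) 1) ∂(Lm μ) = Sm μ z B :=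
  lint_one_sub_rn (Qm_add_Sm μ z) hB

lemma lint_cross_gk {B : Set ℝ} (hB : MeasurableSet B) :
    ∫⁻ y in B, (1 - min (gf μ z y) 1) * min (kf μ z y) 1 ∂(Lm μ) = Tm μ z B :=
  lint_cross_rn (Qm_add_Sm μ z) (Tm_le_Sm μ z) hB

lemma lint_w {B : Set ℝ} (hB : MeasurableSet B) :
    ∫⁻ y in B, (min (gf μ z y) 1 + (1 - min (gf μ z y) 1) * min (kf μ z y) 1) ∂(Lm μ)
      = Qm μ z B + Tm μ z B := by
  rw [lintegral_add_left ((measurable_gf μ z).min measurable_const)]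
  rw [lint_min_gf μ z hB, lint_cross_gk μ z hB]

end Meas

/-! ### Partition, a.e. helpers, master lemmas -/

section Helpers

variable {X : Type*} [MeasurableSpace X]

/-- Partition of a measure over the fibers of a map into a finite discrete space. -/
lemma measure_partition {ι : Type*} [Fintype ι] [MeasurableSpace ι] [MeasurableSingletonClass ι]
    (ν : Measure X) (f : X → ι) (hf : Measurable f) (s : Set X) (hs : MeasurableSet s) :
    ν s = ∑ z : ι, ν (s ∩ f ⁻¹' {z}) := by
  have hcov : s = ⋃ z : ι, s ∩ f ⁻¹' {z} := by
    ext x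
    simp only [Set.mem_iUnion, Set.mem_inter_iff, Set.mem_preimage, Set.mem_singleton_iff]
    exact ⟨fun h => ⟨f x, h, rfl⟩, fun ⟨z, h, _⟩ => h⟩
  rw [← tsum_fintype (L := .unconditional _)]
  conv_lhs => rw [hcov]
  refine measure_iUnion (fun i j hij => ?_) (fun z => hs.inter (hf (measurableSet_singleton z)))
  refine Set.disjoint_left.2 ?_
  rintro x ⟨-, hi⟩ ⟨-, hj⟩
  exact hij (by simp only [Set.mem_preimage, Set.mem_singleton_iff] at hi hj; rw [← hi, ← hj])

/-- If two sets agree on a conull set, they have the same measure. -/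
lemma meas_eq_on_conull {ν : Measure X} {s t C : Set X} (hC : ν Cᶜ = 0) (h : s ∩ C = t ∩ C) :
    ν s = ν t := by
  rw [← measure_inter_conull hC, h, measure_inter_conull hC]

/-- Splitting a set by another set. -/
lemma meas_split {ν : Measure X} {s t : Set X} (hs : MeasurableSet s) :
    ν (t ∩ s) + ν (t \ s) = ν t := measure_inter_add_diff t hs

end Helpers

section Master

variable (μ : Measure (PrimM K)) [IsProbabilityMeasure μ]

noncomputable def mhat : Measure ((ℝ × ℝ) × PrimM K) := unif2.prod μ
noncomputable def nuL : Measure ((ℝ × ℝ) × ℝ) := unif2.prod (Lm μ)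

instance : IsProbabilityMeasure (mhat μ) := by unfold mhat; infer_instance
instance : IsProbabilityMeasure (nuL μ) := by unfold nuL; infer_instance

lemma master0 {S : Set ((ℝ × ℝ) × ℝ)} (hS : MeasurableSet S) :
    mhat μ {p : (ℝ × ℝ) × PrimM K | (p.1, Y1 p.2) ∈ S} = nuL μ S := by
  have hmap : Measurable (fun p : (ℝ × ℝ) × PrimM K => (p.1, Y1 p.2)) :=
    measurable_fst.prodMk (measurable_Y1.comp measurable_snd)
  have hT : MeasurableSet {p : (ℝ × ℝ) × PrimM K | (p.1, Y1 p.2) ∈ S} := hmap hS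
  rw [mhat, Measure.prod_apply hT, nuL, Measure.prod_apply hS]
  refine lintegral_congr fun uv => ?_
  have : (Prod.mk uv ⁻¹' {p : (ℝ × ℝ) × PrimM K | (p.1, Y1 p.2) ∈ S})
      = Y1 ⁻¹' (Prod.mk uv ⁻¹' S) := rfl
  rw [this, Lm_apply μ (measurable_prodMk_left hS)]

lemma master1 (hIV : IVvalid μ) {S : Set ((ℝ × ℝ) × ℝ)} (hS : MeasurableSet S) (z : Fin K) :
    mhat μ {p : (ℝ × ℝ) × PrimM K | (p.1, Y1 p.2) ∈ S ∧ pz p.2 = z}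
      = nuL μ S * μ {ω | pz ω = z} := by
  have hmap : Measurable (fun p : (ℝ × ℝ) × PrimM K => (p.1, Y1 p.2)) :=
    measurable_fst.prodMk (measurable_Y1.comp measurable_snd)
  have hT : MeasurableSet {p : (ℝ × ℝ) × PrimM K | (p.1, Y1 p.2) ∈ S ∧ pz p.2 = z} :=
    (hmap hS).inter ((measurable_pz.comp measurable_snd) (measurableSet_singleton z))
  rw [mhat, Measure.prod_apply hT]
  have hsec : ∀ uv : ℝ × ℝ,
      μ (Prod.mk uv ⁻¹' {p : (ℝ × ℝ) × PrimM K | (p.1, Y1 p.2) ∈ S ∧ pz p.2 = z})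
        = Lm μ (Prod.mk uv ⁻¹' S) * μ {ω | pz ω = z} := by
    intro uv
    have hA : MeasurableSet {w : ℝ × ℝ × (Fin K → Bool → Bool) | w.2.1 ∈ Prod.mk uv ⁻¹' S} :=
      (measurable_fst.comp measurable_snd) (measurable_prodMk_left hS)
    have := hIV {w : ℝ × ℝ × (Fin K → Bool → Bool) | w.2.1 ∈ Prod.mk uv ⁻¹' S} z hA
    have hset1 : {ω : PrimM K | (ω.1, ω.2.1, ω.2.2.1) ∈
          {w : ℝ × ℝ × (Fin K → Bool → Bool) | w.2.1 ∈ Prod.mk uv ⁻¹' S} ∧ pz ω = z}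
        = Prod.mk uv ⁻¹' {p : (ℝ × ℝ) × PrimM K | (p.1, Y1 p.2) ∈ S ∧ pz p.2 = z} := rfl
    have hset2 : {ω : PrimM K | (ω.1, ω.2.1, ω.2.2.1) ∈
          {w : ℝ × ℝ × (Fin K → Bool → Bool) | w.2.1 ∈ Prod.mk uv ⁻¹' S}}
        = Y1 ⁻¹' (Prod.mk uv ⁻¹' S) := rfl
    rw [hset1, hset2] at this
    rw [this, Lm_apply μ (measurable_prodMk_left hS)]
  calc ∫⁻ uv, μ (Prod.mk uv ⁻¹' {p : (ℝ × ℝ) × PrimM K | (p.1, Y1 p.2) ∈ S ∧ pz p.2 = z}) ∂unif2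
      = ∫⁻ uv, Lm μ (Prod.mk uv ⁻¹' S) * μ {ω | pz ω = z} ∂unif2 := lintegral_congr hsec
    _ = (∫⁻ uv, Lm μ (Prod.mk uv ⁻¹' S) ∂unif2) * μ {ω | pz ω = z} :=
        lintegral_mul_const' _ _ (measure_ne_top _ _)
    _ = nuL μ S * μ {ω | pz ω = z} := by rw [nuL, Measure.prod_apply hS]

/-- Computation of `nuL` via sections. -/
lemma nuL_sect' {S : Set ((ℝ × ℝ) × ℝ)} (hS : MeasurableSet S) {B : Set ℝ}
    (hB : MeasurableSet B) (w : ℝ → ℝ≥0∞)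
    (hw : ∀ y, unif2 ((fun uv => (uv, y)) ⁻¹' S) = B.indicator w y) :
    nuL μ S = ∫⁻ y in B, w y ∂(Lm μ) := by
  rw [nuL, Measure.prod_apply_symm hS, lintegral_congr hw, lintegral_indicator hB]

end Master

/-! ### The rearranged measure and its computations -/

section Constr

variable (μ : Measure (PrimM K)) [IsProbabilityMeasure μ]

/-- New potential-treatment matrix built from the uniform randomizers. -/
noncomputable def Dnew (y : ℝ) (uv : ℝ × ℝ) : Fin K → Bool → Bool :=
  fun ζ a => decide (ENNReal.ofReal uv.1 ≤ gf μ ζ y)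
    || (a && decide (ENNReal.ofReal uv.2 ≤ kf μ ζ y))

/-- The rearrangement map. -/
noncomputable def Phi (p : (ℝ × ℝ) × PrimM K) : PrimM K :=
  ((0:ℝ), Y1 p.2, Dnew μ (Y1 p.2) p.1, pz p.2)

/-- The IV-monotone rearrangement of `μ`. -/
noncomputable def muP : Measure (PrimM K) := (mhat μ).map (Phi μ)

lemma measurable_decide' {X : Type*} [MeasurableSpace X] {q : X → Prop} [DecidablePred q]
    (h : MeasurableSet {x | q x}) : Measurable fun x => decide (q x) := by
  apply measurable_to_countable'
  intro b; cases b
  · convert h.compl using 1; ext x; simp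
  · convert h using 1; ext x; simp

lemma ms_cond1 (ζ : Fin K) :
    MeasurableSet {q : (ℝ × ℝ) × ℝ | ENNReal.ofReal q.1.1 ≤ gf μ ζ q.2} :=
  measurableSet_le (ENNReal.measurable_ofReal.comp (measurable_fst.comp measurable_fst))
    ((measurable_gf μ ζ).comp measurable_snd)

lemma ms_cond2 (ζ : Fin K) :
    MeasurableSet {q : (ℝ × ℝ) × ℝ | ENNReal.ofReal q.1.2 ≤ kf μ ζ q.2} :=
  measurableSet_le (ENNReal.measurable_ofReal.comp (measurable_snd.comp measurable_fst))
    ((measurable_kf μ ζ).comp measurable_snd)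

lemma measurable_DnewP : Measurable fun q : (ℝ × ℝ) × ℝ => Dnew μ q.2 q.1 := by
  refine measurable_pi_lambda _ fun ζ => measurable_pi_lambda _ fun a => ?_
  have h1 : Measurable fun q : (ℝ × ℝ) × ℝ => decide (ENNReal.ofReal q.1.1 ≤ gf μ ζ q.2) :=
    measurable_decide' (ms_cond1 μ ζ)
  have h2 : Measurable fun q : (ℝ × ℝ) × ℝ => decide (ENNReal.ofReal q.1.2 ≤ kf μ ζ q.2) :=
    measurable_decide' (ms_cond2 μ ζ)
  exact (Measurable.of_discrete (f := fun bb : Bool × Bool => bb.1 || (a && bb.2))).comp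
    (h1.prodMk h2)

lemma measurable_Phi : Measurable (Phi μ) := by
  refine measurable_const.prodMk (((measurable_Y1.comp measurable_snd)).prodMk (Measurable.prodMk ?_ (measurable_pz.comp measurable_snd)))
  exact (measurable_DnewP μ).comp ((measurable_fst).prodMk (measurable_Y1.comp measurable_snd))

instance : IsProbabilityMeasure (muP μ) :=
  Measure.isProbabilityMeasure_map (measurable_Phi μ).aemeasurable

-- unfolding lemmas
lemma pd_Phi (p : (ℝ × ℝ) × PrimM K) (ζ : Fin K) (a : Bool) :
    pd (Phi μ p) ζ a = Dnew μ (Y1 p.2) p.1 ζ a := rfl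
lemma pz_Phi (p : (ℝ × ℝ) × PrimM K) : pz (Phi μ p) = pz p.2 := rfl
lemma Y1_Phi (p : (ℝ × ℝ) × PrimM K) : Y1 (Phi μ p) = Y1 p.2 := rfl
lemma Y0_Phi (p : (ℝ × ℝ) × PrimM K) : Y0 (Phi μ p) = 0 := rfl

lemma Dnew_false (y : ℝ) (uv : ℝ × ℝ) (ζ : Fin K) :
    Dnew μ y uv ζ false = decide (ENNReal.ofReal uv.1 ≤ gf μ ζ y) := by
  simp [Dnew]

lemma Dnew_true (y : ℝ) (uv : ℝ × ℝ) (ζ : Fin K) :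
    (Dnew μ y uv ζ true = true)
      ↔ (ENNReal.ofReal uv.1 ≤ gf μ ζ y ∨ ENNReal.ofReal uv.2 ≤ kf μ ζ y) := by
  simp [Dnew]

-- measurable sets in PrimM
lemma msD1 (z : Fin K) (a b : Bool) : MeasurableSet {ω : PrimM K | pd ω z a = b} :=
  measurableSet_eq_fun (measurable_pd_zz z a) measurable_const

variable {μ}

lemma muP_pz (z : Fin K) : muP μ {ω | pz ω = z} = μ {ω | pz ω = z} := by
  rw [muP, Measure.map_apply (measurable_Phi μ) (measurableSet_pzz z)]
  have : Phi μ ⁻¹' {ω | pz ω = z} = Set.univ ×ˢ {ω : PrimM K | pz ω = z} := by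
    ext p; simp [Phi, pz, Set.mem_prod]
  rw [this, mhat, Measure.prod_prod]
  simp

lemma nuL_S0 (z : Fin K) {B : Set ℝ} (hB : MeasurableSet B) :
    nuL μ {q : (ℝ × ℝ) × ℝ | q.2 ∈ B ∧ ENNReal.ofReal q.1.1 ≤ gf μ z q.2} = Qm μ z B := by
  have hS : MeasurableSet {q : (ℝ × ℝ) × ℝ | q.2 ∈ B ∧ ENNReal.ofReal q.1.1 ≤ gf μ z q.2} :=
    (measurable_snd hB).inter (ms_cond1 μ z)
  rw [nuL_sect' μ hS hB (fun y => min (gf μ z y) 1) ?_, lint_min_gf μ z hB]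
  intro y
  by_cases hy : y ∈ B
  · have : ((fun uv => (uv, y)) ⁻¹' {q : (ℝ × ℝ) × ℝ | q.2 ∈ B ∧ ENNReal.ofReal q.1.1 ≤ gf μ z q.2})
        = {uv : ℝ × ℝ | ENNReal.ofReal uv.1 ≤ gf μ z y} := by
      ext uv; simp [hy]
    rw [this, unif2_le1, Set.indicator_of_mem hy]
  · have : ((fun uv => (uv, y)) ⁻¹' {q : (ℝ × ℝ) × ℝ | q.2 ∈ B ∧ ENNReal.ofReal q.1.1 ≤ gf μ z q.2})
        = ∅ := by
      ext uv; simp [hy]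
    rw [this, Set.indicator_of_notMem hy]; simp

lemma nuL_S0c (z : Fin K) :
    nuL μ {q : (ℝ × ℝ) × ℝ | ¬ ENNReal.ofReal q.1.1 ≤ gf μ z q.2} = Sm μ z Set.univ := by
  have hS : MeasurableSet {q : (ℝ × ℝ) × ℝ | ¬ ENNReal.ofReal q.1.1 ≤ gf μ z q.2} :=
    (ms_cond1 μ z).compl
  rw [nuL_sect' μ hS MeasurableSet.univ (fun y => 1 - min (gf μ z y) 1) ?_,
    lint_one_sub_gf μ z MeasurableSet.univ]
  intro y
  have : ((fun uv => (uv, y)) ⁻¹' {q : (ℝ × ℝ) × ℝ | ¬ ENNReal.ofReal q.1.1 ≤ gf μ z q.2})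
      = {uv : ℝ × ℝ | ¬ ENNReal.ofReal uv.1 ≤ gf μ z y} := by
    ext uv; simp
  rw [this, unif2_nle1]
  simp

lemma nuL_S1 (z : Fin K) {B : Set ℝ} (hB : MeasurableSet B) :
    nuL μ {q : (ℝ × ℝ) × ℝ | q.2 ∈ B ∧
        (ENNReal.ofReal q.1.1 ≤ gf μ z q.2 ∨ ENNReal.ofReal q.1.2 ≤ kf μ z q.2)}
      = Qm μ z B + Tm μ z B := by
  have hS : MeasurableSet {q : (ℝ × ℝ) × ℝ | q.2 ∈ B ∧
      (ENNReal.ofReal q.1.1 ≤ gf μ z q.2 ∨ ENNReal.ofReal q.1.2 ≤ kf μ z q.2)} :=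
    (measurable_snd hB).inter ((ms_cond1 μ z).union (ms_cond2 μ z))
  rw [nuL_sect' μ hS hB
      (fun y => min (gf μ z y) 1 + (1 - min (gf μ z y) 1) * min (kf μ z y) 1) ?_,
    lint_w μ z hB]
  intro y
  by_cases hy : y ∈ B
  · have : ((fun uv => (uv, y)) ⁻¹' {q : (ℝ × ℝ) × ℝ | q.2 ∈ B ∧
        (ENNReal.ofReal q.1.1 ≤ gf μ z q.2 ∨ ENNReal.ofReal q.1.2 ≤ kf μ z q.2)})
        = {uv : ℝ × ℝ | ENNReal.ofReal uv.1 ≤ gf μ z y ∨ ENNReal.ofReal uv.2 ≤ kf μ z y} := by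
      ext uv; simp [hy]
    rw [this, unif2_or, Set.indicator_of_mem hy]
  · have : ((fun uv => (uv, y)) ⁻¹' {q : (ℝ × ℝ) × ℝ | q.2 ∈ B ∧
        (ENNReal.ofReal q.1.1 ≤ gf μ z q.2 ∨ ENNReal.ofReal q.1.2 ≤ kf μ z q.2)}) = ∅ := by
      ext uv; simp [hy]
    rw [this, Set.indicator_of_notMem hy]; simp

/-- probability of `{Y1 ∈ B ∧ D'(z,0) = true ∧ Z = z}` under the rearranged measure. -/
lemma muP_obs_true (hIV : IVvalid μ) (z : Fin K) {B : Set ℝ} (hB : MeasurableSet B) :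
    muP μ {ω | Y1 ω ∈ B ∧ pd ω z false = true ∧ pz ω = z}
      = Qm μ z B * μ {ω | pz ω = z} := by
  have hset : MeasurableSet {ω : PrimM K | Y1 ω ∈ B ∧ pd ω z false = true ∧ pz ω = z} :=
    (measurable_Y1 hB).inter ((msD1 z false true).inter (measurableSet_pzz z))
  rw [muP, Measure.map_apply (measurable_Phi μ) hset]
  have hS : MeasurableSet {q : (ℝ × ℝ) × ℝ | q.2 ∈ B ∧ ENNReal.ofReal q.1.1 ≤ gf μ z q.2} :=
    (measurable_snd hB).inter (ms_cond1 μ z)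
  have hpre : Phi μ ⁻¹' {ω | Y1 ω ∈ B ∧ pd ω z false = true ∧ pz ω = z}
      = {p : (ℝ × ℝ) × PrimM K |
          (p.1, Y1 p.2) ∈ {q : (ℝ × ℝ) × ℝ | q.2 ∈ B ∧ ENNReal.ofReal q.1.1 ≤ gf μ z q.2}
            ∧ pz p.2 = z} := by
    ext p
    simp only [Set.mem_preimage, Set.mem_setOf_eq, Y1_Phi, pd_Phi, pz_Phi, Dnew_false,
      decide_eq_true_eq, and_assoc]
  rw [hpre, master1 μ hIV hS z, nuL_S0 z hB]

lemma muP_obs_false (hIV : IVvalid μ) (z : Fin K) {B : Set ℝ} (hB : MeasurableSet B) :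
    muP μ {ω | obsY ω ∈ B ∧ obsD ω = false ∧ pz ω = z}
      = B.indicator (fun _ => (1:ℝ≥0∞)) 0 * (Sm μ z Set.univ * μ {ω | pz ω = z}) := by
  have hset : MeasurableSet {ω : PrimM K | obsY ω ∈ B ∧ obsD ω = false ∧ pz ω = z} :=
    (measurable_obsY hB).inter
      ((measurableSet_eq_fun measurable_obsD measurable_const).inter (measurableSet_pzz z))
  rw [muP, Measure.map_apply (measurable_Phi μ) hset]
  have hpre : Phi μ ⁻¹' {ω | obsY ω ∈ B ∧ obsD ω = false ∧ pz ω = z}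
      = {p : (ℝ × ℝ) × PrimM K |
          (p.1, Y1 p.2) ∈ {q : (ℝ × ℝ) × ℝ |
            (0:ℝ) ∈ B ∧ ¬ ENNReal.ofReal q.1.1 ≤ gf μ z q.2} ∧ pz p.2 = z} := by
    ext p
    simp only [Set.mem_preimage, Set.mem_setOf_eq, pz_Phi]
    constructor
    · rintro ⟨hy, hd, hz⟩
      rw [obsD, pd_Phi, pz_Phi, hz, Dnew_false] at hd
      rw [obsY, obsD, pd_Phi, pz_Phi, hz, Dnew_false] at hy
      simp only [hd] at hy ⊢
      simp only [decide_eq_false_iff_not] at hd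
      exact ⟨⟨by simpa [Phi] using hy, hd⟩, hz⟩
    · rintro ⟨⟨h0, hcond⟩, hz⟩
      have hd : obsD (Phi μ p) = false := by
        rw [obsD, pd_Phi, pz_Phi, hz, Dnew_false]
        simpa using hcond
      refine ⟨?_, hd, hz⟩
      rw [obsY, hd]
      simpa [Phi] using h0
  rw [hpre]
  by_cases h0 : (0:ℝ) ∈ B
  · have he : {q : (ℝ × ℝ) × ℝ | (0:ℝ) ∈ B ∧ ¬ ENNReal.ofReal q.1.1 ≤ gf μ z q.2}
        = {q : (ℝ × ℝ) × ℝ | ¬ ENNReal.ofReal q.1.1 ≤ gf μ z q.2} := by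
      ext q; simp [h0]
    have hS : MeasurableSet {q : (ℝ × ℝ) × ℝ | ¬ ENNReal.ofReal q.1.1 ≤ gf μ z q.2} :=
      (ms_cond1 μ z).compl
    rw [he, master1 μ hIV hS z, nuL_S0c z, Set.indicator_of_mem h0, one_mul]
  · have he : {q : (ℝ × ℝ) × ℝ | (0:ℝ) ∈ B ∧ ¬ ENNReal.ofReal q.1.1 ≤ gf μ z q.2} = ∅ := by
      ext q; simp [h0]
    rw [he]
    have he2 : {p : (ℝ × ℝ) × PrimM K | (p.1, Y1 p.2) ∈ (∅ : Set ((ℝ × ℝ) × ℝ)) ∧ pz p.2 = z}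
        = ∅ := by
      ext p; simp
    rw [he2, Set.indicator_of_notMem h0]
    simp

/-- probability of `{Y1 ∈ B ∧ D'(z,1) = true ∧ Z = z}` under the rearranged measure. -/
lemma muP_treated (hIV : IVvalid μ) (z : Fin K) {B : Set ℝ} (hB : MeasurableSet B) :
    muP μ {ω | Y1 ω ∈ B ∧ pd ω z true = true ∧ pz ω = z}
      = (Qm μ z B + Tm μ z B) * μ {ω | pz ω = z} := by
  have hset : MeasurableSet {ω : PrimM K | Y1 ω ∈ B ∧ pd ω z true = true ∧ pz ω = z} :=
    (measurable_Y1 hB).inter ((msD1 z true true).inter (measurableSet_pzz z))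
  rw [muP, Measure.map_apply (measurable_Phi μ) hset]
  have hS : MeasurableSet {q : (ℝ × ℝ) × ℝ | q.2 ∈ B ∧
      (ENNReal.ofReal q.1.1 ≤ gf μ z q.2 ∨ ENNReal.ofReal q.1.2 ≤ kf μ z q.2)} :=
    (measurable_snd hB).inter ((ms_cond1 μ z).union (ms_cond2 μ z))
  have hpre : Phi μ ⁻¹' {ω | Y1 ω ∈ B ∧ pd ω z true = true ∧ pz ω = z}
      = {p : (ℝ × ℝ) × PrimM K |
          (p.1, Y1 p.2) ∈ {q : (ℝ × ℝ) × ℝ | q.2 ∈ B ∧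
            (ENNReal.ofReal q.1.1 ≤ gf μ z q.2 ∨ ENNReal.ofReal q.1.2 ≤ kf μ z q.2)}
            ∧ pz p.2 = z} := by
    ext p
    simp only [Set.mem_preimage, Set.mem_setOf_eq, Y1_Phi, pd_Phi, pz_Phi, Dnew_true, and_assoc]
  rw [hpre, master1 μ hIV hS z, nuL_S1 z hB]

end Constr

/-! ### Computations for a measure satisfying the model assumptions -/

section MuSide

variable {μ : Measure (PrimM K)} [IsProbabilityMeasure μ]

lemma msC (z : Fin K) : MeasurableSet {ω : PrimM K | pd ω z false ≤ pd ω z true} := by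
  have : {ω : PrimM K | pd ω z false ≤ pd ω z true}
      = (fun ω => (pd ω z false, pd ω z true)) ⁻¹' {bb : Bool × Bool | bb.1 ≤ bb.2} := rfl
  rw [this]
  exact ((measurable_pd_zz z false).prodMk (measurable_pd_zz z true)) MeasurableSet.of_discrete

lemma msMono (z z' : Fin K) : MeasurableSet {ω : PrimM K | pd ω z' false ≤ pd ω z false} := by
  have : {ω : PrimM K | pd ω z' false ≤ pd ω z false}
      = (fun ω => (pd ω z' false, pd ω z false)) ⁻¹' {bb : Bool × Bool | bb.1 ≤ bb.2} := rfl
  rw [this]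
  exact ((measurable_pd_zz z' false).prodMk (measurable_pd_zz z false)) MeasurableSet.of_discrete

lemma msY0 : MeasurableSet {ω : PrimM K | ω.1 = 0} :=
  measurableSet_eq_fun measurable_Y0 measurable_const

/-- pure set identity for the observed data with `D = true`. -/
lemma set_obs_true (z : Fin K) (B : Set ℝ) :
    {ω : PrimM K | obsY ω ∈ B ∧ obsD ω = true ∧ pz ω = z}
      = {ω : PrimM K | Y1 ω ∈ B ∧ pd ω z false = true ∧ pz ω = z} := by
  ext ω
  simp only [Set.mem_setOf_eq]
  constructor
  · rintro ⟨hy, hd, hz⟩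
    have hd' : pd ω z false = true := by rw [← hz]; exact hd
    refine ⟨?_, hd', hz⟩
    rw [obsY, if_pos hd] at hy
    exact hy
  · rintro ⟨hy, hd, hz⟩
    have hd' : obsD ω = true := by rw [obsD, hz]; exact hd
    refine ⟨?_, hd', hz⟩
    rw [obsY, if_pos hd']
    exact hy

/-- IV validity applied to cylinder sets in `(Y1, D(ζ,a))`. -/
lemma hIV_Y1pd (hIV : IVvalid μ) (z ζ : Fin K) (a b : Bool) {B : Set ℝ} (hB : MeasurableSet B) :
    μ {ω | Y1 ω ∈ B ∧ pd ω ζ a = b ∧ pz ω = z}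
      = μ {ω | Y1 ω ∈ B ∧ pd ω ζ a = b} * μ {ω | pz ω = z} := by
  have hA : MeasurableSet {w : ℝ × ℝ × (Fin K → Bool → Bool) | w.2.1 ∈ B ∧ w.2.2 ζ a = b} := by
    refine ((measurable_fst.comp measurable_snd) hB).inter ?_
    exact ((Measurable.of_discrete (f := fun d : Fin K → Bool → Bool => d ζ a)).comp
      (measurable_snd.comp measurable_snd)) (measurableSet_singleton b)
  have := hIV {w : ℝ × ℝ × (Fin K → Bool → Bool) | w.2.1 ∈ B ∧ w.2.2 ζ a = b} z hA
  have h1 : {ω : PrimM K | (ω.1, ω.2.1, ω.2.2.1) ∈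
        {w : ℝ × ℝ × (Fin K → Bool → Bool) | w.2.1 ∈ B ∧ w.2.2 ζ a = b} ∧ pz ω = z}
      = {ω : PrimM K | Y1 ω ∈ B ∧ pd ω ζ a = b ∧ pz ω = z} := by
    ext ω; simp [Y1, pd, and_assoc]
  have h2 : {ω : PrimM K | (ω.1, ω.2.1, ω.2.2.1) ∈
        {w : ℝ × ℝ × (Fin K → Bool → Bool) | w.2.1 ∈ B ∧ w.2.2 ζ a = b}}
      = {ω : PrimM K | Y1 ω ∈ B ∧ pd ω ζ a = b} := by
    ext ω; simp [Y1, pd]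
  rw [h1, h2] at this
  exact this

lemma hIV_pd (hIV : IVvalid μ) (z ζ : Fin K) (a b : Bool) :
    μ {ω | pd ω ζ a = b ∧ pz ω = z} = μ {ω | pd ω ζ a = b} * μ {ω | pz ω = z} := by
  have := hIV_Y1pd hIV z ζ a b MeasurableSet.univ
  simpa using this

lemma Qm_apply' (z : Fin K) {B : Set ℝ} (hB : MeasurableSet B) :
    Qm μ z B = μ {ω | Y1 ω ∈ B ∧ pd ω z false = true} := by
  rw [Qm_apply μ z hB]; rfl

lemma Tm_apply' (z : Fin K) {B : Set ℝ} (hB : MeasurableSet B) :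
    Tm μ z B = μ {ω | Y1 ω ∈ B ∧ (pd ω z true = true ∧ pd ω z false = false)} := by
  rw [Tm_apply μ z hB]; rfl

lemma Sm_univ' (z : Fin K) : Sm μ z Set.univ = μ {ω | pd ω z false = false} := by
  rw [Sm_apply μ z MeasurableSet.univ]
  congr 1
  simp

/-- splitting `{D(z,1) = 1}` using policy monotonicity. -/
lemma mu_split_policy (hPM : policyMono μ) (z : Fin K) {B : Set ℝ} (hB : MeasurableSet B) :
    μ {ω | Y1 ω ∈ B ∧ pd ω z true = true} = Qm μ z B + Tm μ z B := by
  have hC : μ {ω : PrimM K | pd ω z false ≤ pd ω z true}ᶜ = 0 :=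
    (prob_compl_eq_zero_iff (msC z)).2 (hPM z)
  have hsets : {ω : PrimM K | Y1 ω ∈ B ∧ pd ω z true = true}
        ∩ {ω | pd ω z false ≤ pd ω z true}
      = ({ω : PrimM K | Y1 ω ∈ B ∧ pd ω z false = true}
          ∪ {ω | Y1 ω ∈ B ∧ (pd ω z true = true ∧ pd ω z false = false)})
        ∩ {ω | pd ω z false ≤ pd ω z true} := by
    ext ω
    simp only [Set.mem_inter_iff, Set.mem_union, Set.mem_setOf_eq]
    cases h1 : pd ω z false <;> cases h2 : pd ω z true <;> simp [h1, h2]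
  rw [meas_eq_on_conull hC hsets]
  have hdisj : Disjoint {ω : PrimM K | Y1 ω ∈ B ∧ pd ω z false = true}
      {ω : PrimM K | Y1 ω ∈ B ∧ (pd ω z true = true ∧ pd ω z false = false)} := by
    rw [Set.disjoint_left]
    rintro ω ⟨-, h1⟩ ⟨-, -, h2⟩
    rw [h1] at h2; exact Bool.noConfusion h2
  have hm2 : MeasurableSet {ω : PrimM K | Y1 ω ∈ B ∧ (pd ω z true = true ∧ pd ω z false = false)} :=
    (measurable_Y1 hB).inter ((msD1 z true true).inter (msD1 z false false))
  rw [measure_union hdisj hm2, Qm_apply' z hB, Tm_apply' z hB]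

lemma mu_treated (hIV : IVvalid μ) (hPM : policyMono μ) (z : Fin K) {B : Set ℝ}
    (hB : MeasurableSet B) :
    μ {ω | Y1 ω ∈ B ∧ pd ω z true = true ∧ pz ω = z}
      = (Qm μ z B + Tm μ z B) * μ {ω | pz ω = z} := by
  rw [hIV_Y1pd hIV z z true true hB, mu_split_policy hPM z hB]

lemma mu_obs_true (hIV : IVvalid μ) (z : Fin K) {B : Set ℝ} (hB : MeasurableSet B) :
    μ {ω | obsY ω ∈ B ∧ obsD ω = true ∧ pz ω = z} = Qm μ z B * μ {ω | pz ω = z} := by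
  rw [set_obs_true z B, hIV_Y1pd hIV z z false true hB, ← Qm_apply' z hB]

lemma mu_obs_false (hIV : IVvalid μ) (hY0 : μ {ω : PrimM K | ω.1 = 0} = 1) (z : Fin K)
    {B : Set ℝ} (hB : MeasurableSet B) :
    μ {ω | obsY ω ∈ B ∧ obsD ω = false ∧ pz ω = z}
      = B.indicator (fun _ => (1:ℝ≥0∞)) 0 * (Sm μ z Set.univ * μ {ω | pz ω = z}) := by
  have hC : μ {ω : PrimM K | ω.1 = 0}ᶜ = 0 := (prob_compl_eq_zero_iff msY0).2 hY0
  by_cases h0 : (0:ℝ) ∈ B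
  · have hsets : {ω : PrimM K | obsY ω ∈ B ∧ obsD ω = false ∧ pz ω = z} ∩ {ω | ω.1 = 0}
        = {ω : PrimM K | pd ω z false = false ∧ pz ω = z} ∩ {ω | ω.1 = 0} := by
      ext ω
      simp only [Set.mem_inter_iff, Set.mem_setOf_eq]
      constructor
      · rintro ⟨⟨hy, hd, hz⟩, h1⟩
        exact ⟨⟨by rw [← hz]; exact hd, hz⟩, h1⟩
      · rintro ⟨⟨hd, hz⟩, h1⟩
        have hd' : obsD ω = false := by rw [obsD, hz]; exact hd
        refine ⟨⟨?_, hd', hz⟩, h1⟩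
        rw [obsY, if_neg (by simp [hd'])]
        rw [h1]; exact h0
    rw [meas_eq_on_conull hC hsets, hIV_pd hIV z z false false, ← Sm_univ' z,
      Set.indicator_of_mem h0, one_mul]
  · have hsets : {ω : PrimM K | obsY ω ∈ B ∧ obsD ω = false ∧ pz ω = z} ∩ {ω | ω.1 = 0}
        = (∅ : Set (PrimM K)) ∩ {ω | ω.1 = 0} := by
      ext ω
      simp only [Set.mem_inter_iff, Set.mem_setOf_eq, Set.mem_empty_iff_false, false_and,
        iff_false, not_and]
      rintro ⟨hy, hd, hz⟩ h1
      rw [obsY, if_neg (by simp [hd]), h1] at hy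
      exact h0 hy
    rw [meas_eq_on_conull hC hsets]
    simp [Set.indicator_of_notMem h0]

lemma msObsZ (z : Fin K) : MeasurableSet {o : ObsM K | o.2.2 = z} :=
  (measurable_snd.comp measurable_snd) (measurableSet_singleton z)

lemma msObsT (d : Bool) (z : Fin K) {B : Set ℝ} (hB : MeasurableSet B) :
    MeasurableSet {o : ObsM K | o.1 ∈ B ∧ o.2.1 = d ∧ o.2.2 = z} :=
  (measurable_fst hB).inter (((measurable_fst.comp measurable_snd)
    (measurableSet_singleton d)).inter ((measurable_snd.comp measurable_snd)
      (measurableSet_singleton z)))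

lemma pz_ident {P : Measure (ObsM K)} (hgen : generates μ P) (z : Fin K) :
    P {o : ObsM K | o.2.2 = z} = μ {ω | pz ω = z} := by
  rw [hgen, Measure.map_apply measurable_obsMap (msObsZ z)]
  rfl

lemma obs_ident_true {P : Measure (ObsM K)} (hgen : generates μ P) (hIV : IVvalid μ)
    (z : Fin K) {B : Set ℝ} (hB : MeasurableSet B) :
    P {o : ObsM K | o.1 ∈ B ∧ o.2.1 = true ∧ o.2.2 = z} = Qm μ z B * μ {ω | pz ω = z} := by
  rw [hgen, Measure.map_apply measurable_obsMap (msObsT true z hB)]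
  exact mu_obs_true hIV z hB

end MuSide

end Aux



section Dev
variable {μ : Measure (PrimM K)} [IsProbabilityMeasure μ]

lemma muP_IVvalid (hIV : IVvalid μ) : IVvalid (muP μ) := by
  intro A z hA
  have hS : MeasurableSet {q : (ℝ × ℝ) × ℝ | ((0:ℝ), q.2, Dnew μ q.2 q.1) ∈ A} :=
    (measurable_const.prodMk (measurable_snd.prodMk (measurable_DnewP μ))) hA
  have hst : MeasurableSet {ω : PrimM K | (ω.1, ω.2.1, ω.2.2.1) ∈ A} := measurable_WW hA
  have e1 : muP μ {ω | (ω.1, ω.2.1, ω.2.2.1) ∈ A ∧ pz ω = z}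
      = nuL μ {q : (ℝ × ℝ) × ℝ | ((0:ℝ), q.2, Dnew μ q.2 q.1) ∈ A} * μ {ω | pz ω = z} := by
    have hst2 : MeasurableSet {ω : PrimM K | (ω.1, ω.2.1, ω.2.2.1) ∈ A ∧ pz ω = z} :=
      hst.inter (measurableSet_pzz z)
    rw [muP, Measure.map_apply (measurable_Phi μ) hst2]
    have hpre : Phi μ ⁻¹' {ω | (ω.1, ω.2.1, ω.2.2.1) ∈ A ∧ pz ω = z}
        = {p : (ℝ × ℝ) × PrimM K |
            (p.1, Y1 p.2) ∈ {q : (ℝ × ℝ) × ℝ | ((0:ℝ), q.2, Dnew μ q.2 q.1) ∈ A}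
              ∧ pz p.2 = z} := rfl
    rw [hpre, master1 μ hIV hS z]
  have e2 : muP μ {ω | (ω.1, ω.2.1, ω.2.2.1) ∈ A}
      = nuL μ {q : (ℝ × ℝ) × ℝ | ((0:ℝ), q.2, Dnew μ q.2 q.1) ∈ A} := by
    rw [muP, Measure.map_apply (measurable_Phi μ) hst]
    have hpre : Phi μ ⁻¹' {ω | (ω.1, ω.2.1, ω.2.2.1) ∈ A}
        = {p : (ℝ × ℝ) × PrimM K |
            (p.1, Y1 p.2) ∈ {q : (ℝ × ℝ) × ℝ | ((0:ℝ), q.2, Dnew μ q.2 q.1) ∈ A}} := rfl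
    rw [hpre, master0 μ hS]
  rw [e1, e2, muP_pz z]

lemma muP_policyMono : policyMono (muP μ) := by
  intro z
  rw [muP, Measure.map_apply (measurable_Phi μ) (msC z)]
  have : Phi μ ⁻¹' {ω | pd ω z false ≤ pd ω z true} = Set.univ := by
    ext p
    simp only [Set.mem_preimage, Set.mem_setOf_eq, pd_Phi, Dnew, Bool.false_and, Bool.or_false,
      Bool.true_and, Set.mem_univ, iff_true]
    cases h : decide (ENNReal.ofReal p.1.1 ≤ gf μ z (Y1 p.2)) <;> simp [h]
  rw [this]
  exact measure_univ

lemma muP_Y0 : muP μ {ω : PrimM K | ω.1 = 0} = 1 := by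
  rw [muP, Measure.map_apply (measurable_Phi μ) msY0]
  have : Phi μ ⁻¹' {ω : PrimM K | ω.1 = 0} = Set.univ := by
    ext p; simp [Phi]
  rw [this]
  exact measure_univ

lemma muP_suppY {𝒴 : Set ℝ} (h𝒴 : MeasurableSet 𝒴) (h0 : (0:ℝ) ∈ 𝒴) (hsupp : suppY 𝒴 μ) :
    suppY 𝒴 (muP μ) := by
  have hms : MeasurableSet {ω : PrimM K | ω.1 ∈ 𝒴 ∧ ω.2.1 ∈ 𝒴} :=
    (measurable_Y0 h𝒴).inter (measurable_Y1 h𝒴)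
  rw [suppY, muP, Measure.map_apply (measurable_Phi μ) hms]
  have : Phi μ ⁻¹' {ω : PrimM K | ω.1 ∈ 𝒴 ∧ ω.2.1 ∈ 𝒴} = Set.univ ×ˢ (Y1 ⁻¹' 𝒴) := by
    ext p
    simp only [Set.mem_preimage, Set.mem_setOf_eq, Set.mem_prod, Set.mem_univ, true_and]
    have : (Phi μ p).1 = 0 := rfl
    rw [this]
    simp [h0, Y1_Phi]
    rfl
  rw [this, mhat, Measure.prod_prod]
  simp only [measure_univ, one_mul]
  refine le_antisymm prob_le_one ?_
  rw [← hsupp]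
  exact measure_mono (fun ω hω => hω.2)

lemma set_quota_piece (z : Fin K) :
    {ω : PrimM K | pd ω (pz ω) true = true} ∩ pz ⁻¹' {z}
      = {ω : PrimM K | Y1 ω ∈ Set.univ ∧ pd ω z true = true ∧ pz ω = z} := by
  ext ω
  simp only [Set.mem_inter_iff, Set.mem_setOf_eq, Set.mem_preimage, Set.mem_singleton_iff,
    Set.mem_univ, true_and]
  constructor
  · rintro ⟨h1, h2⟩
    rw [h2] at h1
    exact ⟨h1, h2⟩
  · rintro ⟨h1, h2⟩
    rw [h2]
    exact ⟨h1, rfl⟩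

lemma msQuota : MeasurableSet {ω : PrimM K | pd ω (pz ω) true = true} :=
  measurableSet_eq_fun (measurable_pd_ev true) measurable_const

lemma muP_quota (hIV : IVvalid μ) (hPM : policyMono μ) :
    muP μ {ω | pd ω (pz ω) true = true} = μ {ω | pd ω (pz ω) true = true} := by
  rw [measure_partition (muP μ) pz measurable_pz _ msQuota,
    measure_partition μ pz measurable_pz _ msQuota]
  refine Finset.sum_congr rfl fun z _ => ?_
  rw [set_quota_piece z, muP_treated hIV z MeasurableSet.univ,
    ← mu_treated hIV hPM z MeasurableSet.univ]

lemma Q_mono_of_dir {z z' : Fin K} (h : μ {ω | pd ω z' false ≤ pd ω z false} = 1) :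
    Qm μ z' ≤ Qm μ z := by
  refine Measure.le_iff.2 fun B hB => ?_
  rw [Qm_apply μ z' hB, Qm_apply μ z hB]
  have hC : μ {ω : PrimM K | pd ω z' false ≤ pd ω z false}ᶜ = 0 :=
    (prob_compl_eq_zero_iff (msMono z z')).2 h
  calc μ (Y1 ⁻¹' B ∩ {ω | pd ω z' false = true})
      = μ ((Y1 ⁻¹' B ∩ {ω | pd ω z' false = true}) ∩ {ω | pd ω z' false ≤ pd ω z false}) :=
        (measure_inter_conull hC).symm
    _ ≤ μ (Y1 ⁻¹' B ∩ {ω | pd ω z false = true}) := by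
        refine measure_mono ?_
        rintro ω ⟨⟨h1, h2⟩, h3⟩
        refine ⟨h1, ?_⟩
        simp only [Set.mem_setOf_eq] at h2 h3 ⊢
        rw [h2] at h3
        cases hh : pd ω z false
        · rw [hh] at h3; exact absurd h3 (by simp)
        · rfl

lemma muP_mono_dir {z z' : Fin K} (hord : Qm μ z' ≤ Qm μ z) :
    muP μ {ω | pd ω z' false ≤ pd ω z false} = 1 := by
  have hg : gf μ z' ≤ᵐ[Lm μ] gf μ z := rn_mono (Qm_le_Lm μ z') (Qm_le_Lm μ z) hord
  have hN : Lm μ {y | ¬ gf μ z' y ≤ gf μ z y} = 0 := ae_iff.1 hg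
  rw [← prob_compl_eq_zero_iff (msMono z z'), muP,
    Measure.map_apply (measurable_Phi μ) (msMono z z').compl]
  refine measure_mono_null (fun p hp => ?_) (?_ : mhat μ {p : (ℝ × ℝ) × PrimM K | Y1 p.2 ∈ {y | ¬ gf μ z' y ≤ gf μ z y}} = 0)
  · simp only [Set.mem_preimage, Set.mem_compl_iff, Set.mem_setOf_eq] at hp ⊢
    intro hle
    apply hp
    rw [pd_Phi, pd_Phi, Dnew_false, Dnew_false]
    cases h1 : decide (ENNReal.ofReal p.1.1 ≤ gf μ z' (Y1 p.2))
    · exact Bool.false_le _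
    · have : ENNReal.ofReal p.1.1 ≤ gf μ z' (Y1 p.2) := by simpa using h1
      simp [this.trans hle]
  · have : {p : (ℝ × ℝ) × PrimM K | Y1 p.2 ∈ {y | ¬ gf μ z' y ≤ gf μ z y}}
        = Set.univ ×ˢ (Y1 ⁻¹' {y | ¬ gf μ z' y ≤ gf μ z y}) := by
      ext p; simp [Set.mem_prod]
    rw [this, mhat, Measure.prod_prod, measure_univ, one_mul, ← Lm_apply μ]
    · exact hN
    · exact (measurableSet_le (measurable_gf μ z') (measurable_gf μ z)).compl

end Dev


section Dev2
variable {μ : Measure (PrimM K)} [IsProbabilityMeasure μ]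

/-- Generic computation of the law of `cfY` restricted to `{Z = z}`. -/
lemma cf_piece {ν : Measure (PrimM K)} [IsProbabilityMeasure ν] (z : Fin K)
    (Q T : Measure ℝ)
    (hY0 : ν {ω : PrimM K | ω.1 = 0} = 1)
    (htr : ∀ {B : Set ℝ}, MeasurableSet B →
      ν {ω | Y1 ω ∈ B ∧ pd ω z true = true ∧ pz ω = z} = (Q B + T B) * ν {ω | pz ω = z})
    {B : Set ℝ} (hB : MeasurableSet B) :
    ν (cfY ⁻¹' B ∩ pz ⁻¹' {z})
      = (Q B + T B) * ν {ω | pz ω = z}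
        + B.indicator (fun _ => (1:ℝ≥0∞)) 0
          * (ν {ω | pz ω = z} - (Q Set.univ + T Set.univ) * ν {ω | pz ω = z}) := by
  have hC : ν {ω : PrimM K | ω.1 = 0}ᶜ = 0 := (prob_compl_eq_zero_iff msY0).2 hY0
  -- split the piece along {D(z,1) = 1}
  have hsplit := meas_split (ν := ν) (t := cfY ⁻¹' B ∩ pz ⁻¹' {z}) (msD1 z true true)
  have hts : (cfY ⁻¹' B ∩ pz ⁻¹' {z}) ∩ {ω : PrimM K | pd ω z true = true}
      = {ω : PrimM K | Y1 ω ∈ B ∧ pd ω z true = true ∧ pz ω = z} := by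
    ext ω
    simp only [Set.mem_inter_iff, Set.mem_preimage, Set.mem_singleton_iff, Set.mem_setOf_eq]
    constructor
    · rintro ⟨⟨hcf, hz⟩, hs⟩
      refine ⟨?_, hs, hz⟩
      rwa [cfY, if_pos (by rw [hz]; exact hs)] at hcf
    · rintro ⟨hy, hs, hz⟩
      refine ⟨⟨?_, hz⟩, hs⟩
      rwa [cfY, if_pos (by rw [hz]; exact hs)]
  have htd : (cfY ⁻¹' B ∩ pz ⁻¹' {z}) \ {ω : PrimM K | pd ω z true = true}
      = {ω : PrimM K | ω.1 ∈ B ∧ pd ω z true = false ∧ pz ω = z} := by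
    ext ω
    simp only [Set.mem_diff, Set.mem_inter_iff, Set.mem_preimage, Set.mem_singleton_iff,
      Set.mem_setOf_eq]
    constructor
    · rintro ⟨⟨hcf, hz⟩, hs⟩
      have hs' : pd ω z true = false := by
        cases hh : pd ω z true
        · rfl
        · exact absurd hh hs
      refine ⟨?_, hs', hz⟩
      rwa [cfY, if_neg (by rw [hz, hs']; exact Bool.noConfusion)] at hcf
    · rintro ⟨hy, hs, hz⟩
      refine ⟨⟨?_, hz⟩, by rw [hs]; exact Bool.noConfusion⟩
      rwa [cfY, if_neg (by rw [hz, hs]; exact Bool.noConfusion)]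
  -- the untreated mass
  have hsplit2 := meas_split (ν := ν) (t := (pz ⁻¹' {z} : Set (PrimM K))) (msD1 z true true)
  have hts2 : ((pz ⁻¹' {z} : Set (PrimM K))) ∩ {ω : PrimM K | pd ω z true = true}
      = {ω : PrimM K | Y1 ω ∈ Set.univ ∧ pd ω z true = true ∧ pz ω = z} := by
    ext ω
    simp only [Set.mem_inter_iff, Set.mem_preimage, Set.mem_singleton_iff, Set.mem_setOf_eq,
      Set.mem_univ, true_and]
    tauto
  have htd2 : ((pz ⁻¹' {z} : Set (PrimM K))) \ {ω : PrimM K | pd ω z true = true}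
      = {ω : PrimM K | pd ω z true = false ∧ pz ω = z} := by
    ext ω
    simp only [Set.mem_diff, Set.mem_preimage, Set.mem_singleton_iff, Set.mem_setOf_eq]
    constructor
    · rintro ⟨hz, hs⟩
      refine ⟨?_, hz⟩
      cases hh : pd ω z true
      · rfl
      · exact absurd hh hs
    · rintro ⟨hs, hz⟩
      exact ⟨hz, by rw [hs]; exact Bool.noConfusion⟩
  rw [hts2, htr MeasurableSet.univ, htd2] at hsplit2
  have hzval : ν (pz ⁻¹' {z}) = ν {ω | pz ω = z} := rfl
  rw [hzval] at hsplit2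
  have hcne : (Q Set.univ + T Set.univ) * ν {ω | pz ω = z} ≠ ⊤ := by
    rw [← htr MeasurableSet.univ]
    exact measure_ne_top _ _
  have huntr : ν {ω : PrimM K | pd ω z true = false ∧ pz ω = z}
      = ν {ω | pz ω = z} - (Q Set.univ + T Set.univ) * ν {ω | pz ω = z} := by
    have hx : ν {ω : PrimM K | pd ω z true = false ∧ pz ω = z}
        + (Q Set.univ + T Set.univ) * ν {ω | pz ω = z} = ν {ω | pz ω = z} := by
      rw [add_comm]; exact hsplit2
    exact ENNReal.eq_sub_of_add_eq hcne hx
  -- untreated part of the piece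
  have huB : ν {ω : PrimM K | ω.1 ∈ B ∧ pd ω z true = false ∧ pz ω = z}
      = B.indicator (fun _ => (1:ℝ≥0∞)) 0
          * (ν {ω | pz ω = z} - (Q Set.univ + T Set.univ) * ν {ω | pz ω = z}) := by
    by_cases h0 : (0:ℝ) ∈ B
    · have hsets : {ω : PrimM K | ω.1 ∈ B ∧ pd ω z true = false ∧ pz ω = z} ∩ {ω | ω.1 = 0}
          = {ω : PrimM K | pd ω z true = false ∧ pz ω = z} ∩ {ω | ω.1 = 0} := by
        ext ω
        simp only [Set.mem_inter_iff, Set.mem_setOf_eq]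
        constructor
        · rintro ⟨⟨-, h2, h3⟩, h4⟩; exact ⟨⟨h2, h3⟩, h4⟩
        · rintro ⟨⟨h2, h3⟩, h4⟩; exact ⟨⟨by rw [h4]; exact h0, h2, h3⟩, h4⟩
      rw [meas_eq_on_conull hC hsets, huntr, Set.indicator_of_mem h0, one_mul]
    · have hsets : {ω : PrimM K | ω.1 ∈ B ∧ pd ω z true = false ∧ pz ω = z} ∩ {ω | ω.1 = 0}
          = (∅ : Set (PrimM K)) ∩ {ω | ω.1 = 0} := by
        ext ω
        simp only [Set.mem_inter_iff, Set.mem_setOf_eq, Set.mem_empty_iff_false, false_and,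
          iff_false, not_and]
        rintro ⟨h1, -, -⟩ h4
        rw [h4] at h1
        exact h0 h1
      rw [meas_eq_on_conull hC hsets, Set.indicator_of_notMem h0]
      simp
  rw [← hsplit, hts, htd, htr hB, huB]

/-- The rearranged measure has the same counterfactual outcome distribution. -/
lemma map_cfY_eq (hIV : IVvalid μ) (hPM : policyMono μ)
    (hY0 : μ {ω : PrimM K | ω.1 = 0} = 1) :
    (muP μ).map cfY = μ.map cfY := by
  ext B hB
  rw [Measure.map_apply measurable_cfY hB, Measure.map_apply measurable_cfY hB,
    measure_partition (muP μ) pz measurable_pz _ (measurable_cfY hB),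
    measure_partition μ pz measurable_pz _ (measurable_cfY hB)]
  refine Finset.sum_congr rfl fun z _ => ?_
  have h1 := cf_piece (ν := muP μ) z (Qm μ z) (Tm μ z) muP_Y0
    (fun {B'} hB' => by rw [muP_pz z]; exact muP_treated hIV z hB') hB
  have h2 := cf_piece (ν := μ) z (Qm μ z) (Tm μ z) hY0
    (fun {B'} hB' => mu_treated hIV hPM z hB') hB
  rw [h1, h2, muP_pz z]

lemma theta_muP (hIV : IVvalid μ) (hPM : policyMono μ)
    (hY0 : μ {ω : PrimM K | ω.1 = 0} = 1) :
    theta (muP μ) = theta μ := by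
  have h := map_cfY_eq hIV hPM hY0
  have h1 : theta (muP μ) = ∫ y, y ∂((muP μ).map cfY) :=
    (integral_map measurable_cfY.aemeasurable aestronglyMeasurable_id).symm
  have h2 : theta μ = ∫ y, y ∂(μ.map cfY) :=
    (integral_map measurable_cfY.aemeasurable aestronglyMeasurable_id).symm
  rw [h1, h2, h]

/-- Extensionality for measures on the observation space. -/
lemma obs_ext' {P1 P2 : Measure (ObsM K)}
    (h : ∀ (d : Bool) (z : Fin K) {B : Set ℝ}, MeasurableSet B →
      P1 {o : ObsM K | o.1 ∈ B ∧ o.2.1 = d ∧ o.2.2 = z}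
        = P2 {o : ObsM K | o.1 ∈ B ∧ o.2.1 = d ∧ o.2.2 = z}) :
    P1 = P2 := by
  have hf : Measurable (fun o : ObsM K => (o.2.1, o.2.2)) :=
    (measurable_fst.comp measurable_snd).prodMk (measurable_snd.comp measurable_snd)
  ext S hS
  rw [measure_partition P1 (fun o => (o.2.1, o.2.2)) hf _ hS,
    measure_partition P2 (fun o => (o.2.1, o.2.2)) hf _ hS]
  refine Finset.sum_congr rfl fun c _ => ?_
  obtain ⟨d, z⟩ := c
  have hsec : MeasurableSet {y : ℝ | (y, d, z) ∈ S} :=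
    (measurable_id.prodMk measurable_const) hS
  have hset : S ∩ (fun o : ObsM K => (o.2.1, o.2.2)) ⁻¹' {(d, z)}
      = {o : ObsM K | o.1 ∈ {y : ℝ | (y, d, z) ∈ S} ∧ o.2.1 = d ∧ o.2.2 = z} := by
    ext ⟨y, dd, zz⟩
    simp only [Set.mem_inter_iff, Set.mem_preimage, Set.mem_singleton_iff, Prod.mk.injEq,
      Set.mem_setOf_eq]
    constructor
    · rintro ⟨h1, h2, h3⟩
      subst h2; subst h3
      exact ⟨h1, rfl, rfl⟩
    · rintro ⟨h1, h2, h3⟩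
      subst h2; subst h3
      exact ⟨h1, rfl, rfl⟩
  rw [hset, h d z hsec]

/-- The rearranged measure generates the same observables. -/
lemma gen_muP {P : Measure (ObsM K)} (hgen : generates μ P) (hIV : IVvalid μ)
    (hY0 : μ {ω : PrimM K | ω.1 = 0} = 1) : generates (muP μ) P := by
  rw [generates] at hgen ⊢
  rw [hgen]
  refine obs_ext' fun d z B hB => ?_
  rw [Measure.map_apply measurable_obsMap (msObsT d z hB),
    Measure.map_apply measurable_obsMap (msObsT d z hB)]
  have hpre : obsMap ⁻¹' {o : ObsM K | o.1 ∈ B ∧ o.2.1 = d ∧ o.2.2 = z}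
      = {ω : PrimM K | obsY ω ∈ B ∧ obsD ω = d ∧ pz ω = z} := rfl
  rw [hpre]
  cases d
  · rw [mu_obs_false hIV hY0 z hB, muP_obs_false hIV z hB]
  · rw [mu_obs_true hIV z hB, set_obs_true z B, muP_obs_true hIV z hB]

end Dev2

/-- Proposition 2: with a known outcome under `D = 0`, IV
monotonicity has no identifying power: if the identified set under IV monotonicity
is nonempty, it coincides with the identified set without IV monotonicity. -/
theorem statement2 {K : ℕ} (𝒴 : Set ℝ) (hY : IsCompact 𝒴) (h0 : (0 : ℝ) ∈ 𝒴)
    (α : ℝ) (hα : α ∈ Set.Icc (0 : ℝ) 1)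
    (P : Measure (ObsM K)) [IsProbabilityMeasure P]
    (hPz : ∀ z : Fin K, 0 < P {o | o.2.2 = z}) :
    (ThetaI P (famAlphaMon K 𝒴 α)).Nonempty →
      ThetaI P (famAlphaMon K 𝒴 α) = ThetaI P (famAlpha K 𝒴 α) := by
  intro hne
  obtain ⟨t0, μ0, hμ0mem, hgen0, -⟩ := hne
  obtain ⟨hfam0, hmono0⟩ := hμ0mem
  obtain ⟨hP0, hIV0, hPM0, hsup0, hquo0, hY00⟩ := hfam0
  haveI := hP0
  apply Set.Subset.antisymm
  · rintro t ⟨ν, hν, hgen, ht⟩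
    exact ⟨ν, hν.1, hgen, ht⟩
  · rintro t ⟨μ, hfam, hgen, ht⟩
    obtain ⟨hP, hIV, hPM, hsup, hquo, hY0⟩ := hfam
    haveI := hP
    have hπ : ∀ z : Fin K, μ {ω | pz ω = z} = μ0 {ω | pz ω = z} := fun z => by
      rw [← pz_ident hgen z, ← pz_ident hgen0 z]
    have hπ0 : ∀ z : Fin K, μ {ω | pz ω = z} ≠ 0 := fun z => by
      rw [← pz_ident hgen z]; exact (hPz z).ne'
    have hQid : ∀ z, Qm μ z = Qm μ0 z := fun z => by
      refine Measure.ext fun B hB => ?_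
      have h1 := obs_ident_true hgen hIV z hB
      have h2 := obs_ident_true hgen0 hIV0 z hB
      rw [← hπ z] at h2
      exact (ENNReal.mul_left_inj (hπ0 z) (measure_ne_top μ _)).1 (h1.symm.trans h2)
    have hmonoP : ivMono (muP μ) := by
      intro z z'
      rcases hmono0 z z' with h | h
      · left
        refine muP_mono_dir ?_
        rw [hQid z', hQid z]
        exact Q_mono_of_dir h
      · right
        refine muP_mono_dir ?_
        rw [hQid z', hQid z]
        exact Q_mono_of_dir h
    refine ⟨muP μ, ⟨⟨?_, ?_, ?_, ?_, ?_, ?_⟩, hmonoP⟩, ?_, ?_⟩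
    · infer_instance
    · exact muP_IVvalid hIV
    · exact muP_policyMono
    · exact muP_suppY hY.isClosed.measurableSet h0 hsup
    · rw [muP_quota hIV hPM]; exact hquo
    · exact muP_Y0
    · exact gen_muP hgen hIV hY0
    · rw [theta_muP hIV hPM hY0]; exact ht


end IVM
end
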